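/- arXiv:1904.04131 — 6 statements merged into one kernel-verified Lean document; each statement's English description precedes it below -/
import Mathlib

section
/- Let G be a finite connected graph and let {F_1, …, F_k} be a c-partition of E(G) (a partition of E(G) such that every Θ*-class is contained in some F_i). For each i let G_i = G/F_i be the quotient graph and let ℓ_i(u) denote the connected component of G − F_i containing the vertex u. Then for any two vertices u, v ∈ V(G), the distance satisfies d_G(u,v) = Σ_{i=1}^{k} d_{G_i}(ℓ_i(u), ℓ_i(v)). -/
open SimpleGraph

noncomputable section

/-- The Djoković–Winkler relation `Θ` on the edges of a graph `G`:
edges `e = xy` and `f = ab` are related iff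
`d(x,a) + d(y,b) ≠ d(x,b) + d(y,a)`. -/
def theta {V : Type*} (G : SimpleGraph V) (e f : Sym2 V) : Prop :=
  e ∈ G.edgeSet ∧ f ∈ G.edgeSet ∧
    ∃ x y a b : V, e = s(x, y) ∧ f = s(a, b) ∧
      G.dist x a + G.dist y b ≠ G.dist x b + G.dist y a

/-- The quotient graph `G/F`: its vertices are the connected components of
`G − F`, two components being adjacent iff some vertex of one is adjacent in
`G` to some vertex of the other. -/
def quotientGraph {V : Type*} (G : SimpleGraph V) (F : Set (Sym2 V)) :
    SimpleGraph (G.deleteEdges F).ConnectedComponent where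
  Adj X Y := X ≠ Y ∧ ∃ x y : V,
    (G.deleteEdges F).connectedComponentMk x = X ∧
    (G.deleteEdges F).connectedComponentMk y = Y ∧ G.Adj x y
  symm := by
    constructor
    rintro X Y ⟨hne, x, y, hx, hy, hadj⟩
    exact ⟨hne.symm, y, x, hy, hx, hadj.symm⟩
  loopless := by
    constructor
    rintro X ⟨hne, -⟩
    exact hne rfl

/-- `F₁, …, F_k` is a partition of the edge set of `G`. -/
def IsEdgePartition {V : Type*} (G : SimpleGraph V) {k : ℕ}
    (F : Fin k → Set (Sym2 V)) : Prop :=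
  (∀ i, F i ⊆ G.edgeSet) ∧ (∀ e ∈ G.edgeSet, ∃ i, e ∈ F i) ∧
    (∀ i j, i ≠ j → Disjoint (F i) (F j))

/-- `F₁, …, F_k` is a c-partition of the edge set of `G`: a partition such
that every `Θ*`-class (class of the transitive closure of `Θ`) is contained
in some part. -/
def IsCPartition {V : Type*} (G : SimpleGraph V) {k : ℕ}
    (F : Fin k → Set (Sym2 V)) : Prop :=
  IsEdgePartition G F ∧
    ∀ e f : Sym2 V, Relation.TransGen (theta G) e f → ∀ i, e ∈ F i → f ∈ F i

/-- For an edge `e = uv`, `nW G w u v` is `n_u(e|(G,w))`, the sum of the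
weights of the vertices strictly closer to `u` than to `v`. -/
def nW {V : Type*} (G : SimpleGraph V) (w : V → NNReal) (u v : V) : NNReal :=
  ∑ᶠ x ∈ {x : V | G.dist x u < G.dist x v}, w x

/-- The Mostar index of a vertex-edge-weighted graph `(G, w, w')`. -/
def MostarW {V : Type*} (G : SimpleGraph V) (w : V → NNReal)
    (w' : Sym2 V → NNReal) : ℝ :=
  ∑ᶠ e ∈ G.edgeSet, (w' e : ℝ) *
    Sym2.lift ⟨fun u v => |((nW G w u v : ℝ)) - ((nW G w v u : ℝ))|,
      fun _ _ => abs_sub_comm _ _⟩ e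

/-- The (unweighted) Mostar index of a graph `G`. -/
def Mostar {V : Type*} (G : SimpleGraph V) : ℝ :=
  ∑ᶠ e ∈ G.edgeSet,
    Sym2.lift ⟨fun u v =>
      |((Nat.card {x : V | G.dist x u < G.dist x v} : ℝ)) -
        ((Nat.card {x : V | G.dist x v < G.dist x u} : ℝ))|,
      fun _ _ => abs_sub_comm _ _⟩ e

namespace DSAux

attribute [local instance] Classical.propDecidable

variable {V : Type*} {G : SimpleGraph V}

/-- Number of edges (with multiplicity) of a walk lying in `F`. -/
noncomputable def cnt (F : Set (Sym2 V)) {u v : V} (p : G.Walk u v) : ℕ :=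
  (p.edges.map (fun e => if e ∈ F then 1 else 0)).sum

lemma cnt_nil (F : Set (Sym2 V)) {u : V} : cnt F (SimpleGraph.Walk.nil : G.Walk u u) = 0 := rfl

lemma cnt_cons (F : Set (Sym2 V)) {u v w : V} (h : G.Adj u v) (p : G.Walk v w) :
    cnt F (SimpleGraph.Walk.cons h p) = (if s(u, v) ∈ F then 1 else 0) + cnt F p := by
  simp [cnt, SimpleGraph.Walk.edges_cons]

lemma cnt_append (F : Set (Sym2 V)) {u v w : V} (p : G.Walk u v) (q : G.Walk v w) :
    cnt F (p.append q) = cnt F p + cnt F q := by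
  simp [cnt, SimpleGraph.Walk.edges_append]

lemma cnt_darts (F : Set (Sym2 V)) {u v : V} (p : G.Walk u v) :
    cnt F p = (p.darts.map (fun d => if d.edge ∈ F then 1 else 0)).sum := by
  simp [cnt, SimpleGraph.Walk.edges, List.map_map]
  rfl

lemma cnt_eq_zero (F : Set (Sym2 V)) {u v : V} (p : G.Walk u v)
    (h : ∀ e ∈ p.edges, e ∉ F) : cnt F p = 0 := by
  apply List.sum_eq_zero
  intro x hx
  obtain ⟨e, he, rfl⟩ := List.mem_map.mp hx
  simp [h e he]

lemma telescope {M : Type*} [AddCommGroup M] (f : V → M) {u v : V} (p : G.Walk u v) :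
    (p.darts.map (fun d => f d.snd - f d.fst)).sum = f v - f u := by
  induction p with
  | nil => simp
  | cons h q ih => simp only [SimpleGraph.Walk.darts_cons, List.map_cons, List.sum_cons, ih]; abel

lemma sum_swap {α β M : Type*} [AddCommMonoid M] (f : α → β → M) (l1 : List α) (l2 : List β) :
    (l1.map (fun a => (l2.map (f a)).sum)).sum
      = (l2.map (fun b => (l1.map (fun a => f a b)).sum)).sum := by
  induction l1 with
  | nil => simp
  | cons a l ih => simp [ih, List.sum_map_add]

lemma sum_ite_two {α : Type*} (c : ℤ) (p : α → Prop) (l : List α) :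
    (l.map (fun x => if p x then c else 0)).sum
      = c * ((l.map (fun x => if p x then (1 : ℕ) else 0)).sum : ℤ) := by
  induction l with
  | nil => simp
  | cons a l ih =>
    simp only [List.map_cons, List.sum_cons, ih]
    split <;> push_cast <;> ring

lemma theta_symm {e f : Sym2 V} (h : theta G e f) : theta G f e := by
  obtain ⟨he, hf, x, y, a, b, rfl, rfl, hne⟩ := h
  refine ⟨hf, he, a, b, x, y, rfl, rfl, fun hc => hne ?_⟩
  rw [SimpleGraph.dist_comm (u := a) (v := x), SimpleGraph.dist_comm (u := b) (v := y),
    SimpleGraph.dist_comm (u := a) (v := y), SimpleGraph.dist_comm (u := b) (v := x)] at hc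
  omega

/-- Projection: from a walk in `G`, a walk in the quotient of length at most `cnt`. -/
lemma exists_quotient_walk (F : Set (Sym2 V)) {x y : V} (p : G.Walk x y) :
    ∃ q : (quotientGraph G F).Walk ((G.deleteEdges F).connectedComponentMk x)
      ((G.deleteEdges F).connectedComponentMk y), q.length ≤ cnt F p := by
  induction p with
  | nil => exact ⟨SimpleGraph.Walk.nil, by simp⟩
  | @cons x w y h q ih =>
    obtain ⟨q', hq'⟩ := ih
    by_cases hcc : (G.deleteEdges F).connectedComponentMk x
        = (G.deleteEdges F).connectedComponentMk w
    · rw [cnt_cons, hcc]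
      exact ⟨q', by omega⟩
    · have hmem : s(x, w) ∈ F := by
        by_contra hxw
        exact hcc (ConnectedComponent.connectedComponentMk_eq_of_adj
          ((G.deleteEdges_adj).mpr ⟨h, hxw⟩))
      refine ⟨SimpleGraph.Walk.cons ⟨hcc, x, w, rfl, rfl, h⟩ q', ?_⟩
      rw [cnt_cons, if_pos hmem]
      change q'.length + 1 ≤ _
      omega

/-- Lifting: from a walk in the quotient, a walk in `G` with `cnt ≤ length`. -/
lemma exists_lift_walk (F : Set (Sym2 V)) :
    ∀ {X Y : (G.deleteEdges F).ConnectedComponent} (q : (quotientGraph G F).Walk X Y)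
      {x y : V}, (G.deleteEdges F).connectedComponentMk x = X →
      (G.deleteEdges F).connectedComponentMk y = Y →
      ∃ p : G.Walk x y, cnt F p ≤ q.length := by
  intro X Y q
  induction q with
  | nil =>
    intro x y hx hy
    have hreach : (G.deleteEdges F).Reachable x y :=
      (SimpleGraph.ConnectedComponent.eq).mp (hx.trans hy.symm)
    obtain ⟨w⟩ := hreach
    have hsub : ∀ e ∈ w.edges, e ∈ G.edgeSet := by
      intro e he
      have := w.edges_subset_edgeSet he
      rw [SimpleGraph.edgeSet_deleteEdges] at this
      exact this.1
    refine ⟨w.transfer G hsub, ?_⟩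
    rw [SimpleGraph.Walk.length_nil]
    have : cnt F (w.transfer G hsub) = 0 := by
      apply cnt_eq_zero
      intro e he
      rw [SimpleGraph.Walk.edges_transfer] at he
      have := w.edges_subset_edgeSet he
      rw [SimpleGraph.edgeSet_deleteEdges] at this
      exact this.2
    omega
  | @cons X Z Y h q ih =>
    intro x y hx hy
    obtain ⟨hne, a, b, ha, hb, hab⟩ := h
    have hreach : (G.deleteEdges F).Reachable x a :=
      (SimpleGraph.ConnectedComponent.eq).mp (hx.trans ha.symm)
    obtain ⟨w⟩ := hreach
    obtain ⟨p', hp'⟩ := ih hb hy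
    have hsub : ∀ e ∈ w.edges, e ∈ G.edgeSet := by
      intro e he
      have := w.edges_subset_edgeSet he
      rw [SimpleGraph.edgeSet_deleteEdges] at this
      exact this.1
    set w' : G.Walk x a := w.transfer G hsub with hw'
    refine ⟨w'.append (SimpleGraph.Walk.cons hab p'), ?_⟩
    rw [cnt_append, cnt_cons]
    have h0 : cnt F w' = 0 := by
      apply cnt_eq_zero
      intro e he
      rw [hw', SimpleGraph.Walk.edges_transfer] at he
      have := w.edges_subset_edgeSet he
      rw [SimpleGraph.edgeSet_deleteEdges] at this
      exact this.2
    simp only [SimpleGraph.Walk.length_cons, h0]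
    show _ ≤ q.length + 1
    split <;> omega

lemma geodesic_split (hG : G.Connected) :
    ∀ {u v : V} (p : G.Walk u v), p.length = G.dist u v →
      ∀ d ∈ p.darts, G.dist u d.fst + (1 + G.dist d.snd v) = G.dist u v := by
  intro u v p
  induction p with
  | nil => intro _ d hd; simp at hd
  | @cons u w v h q ih =>
    intro hlen d hd
    rw [SimpleGraph.Walk.length_cons] at hlen
    have h1 : G.dist u v ≤ G.dist u w + G.dist w v := hG.dist_triangle
    have h2 : G.dist u w = 1 := SimpleGraph.dist_eq_one_iff_adj.mpr h
    have hq' : G.dist w v ≤ q.length := SimpleGraph.dist_le q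
    have e1 : G.dist u v = G.dist w v + 1 := by omega
    have e2 : q.length = G.dist w v := by omega
    rw [SimpleGraph.Walk.darts_cons] at hd
    rcases List.mem_cons.mp hd with rfl | hd'
    · have hz : G.dist u u = 0 := SimpleGraph.dist_self
      show G.dist u u + (1 + G.dist w v) = G.dist u v
      omega
    · have hih := ih e2 d hd'
      have t1 : G.dist u d.fst ≤ G.dist u w + G.dist w d.fst := hG.dist_triangle
      have t2 : G.dist u v ≤ G.dist u d.fst + G.dist d.fst v := hG.dist_triangle
      have t3 : G.dist d.fst v ≤ G.dist d.fst d.snd + G.dist d.snd v := hG.dist_triangle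
      have t4 : G.dist d.fst d.snd = 1 := SimpleGraph.dist_eq_one_iff_adj.mpr d.adj
      omega

lemma geodesic_dart (hG : G.Connected) {u v : V} (p : G.Walk u v)
    (hp : p.length = G.dist u v) {d : G.Dart} (hd : d ∈ p.darts) :
    G.dist u d.snd = G.dist u d.fst + 1 ∧ G.dist d.fst v = G.dist d.snd v + 1 := by
  have hs := geodesic_split hG p hp d hd
  have t1 : G.dist u d.snd ≤ G.dist u d.fst + G.dist d.fst d.snd := hG.dist_triangle
  have t2 : G.dist u v ≤ G.dist u d.snd + G.dist d.snd v := hG.dist_triangle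
  have t3 : G.dist d.fst v ≤ G.dist d.fst d.snd + G.dist d.snd v := hG.dist_triangle
  have t4 : G.dist u v ≤ G.dist u d.fst + G.dist d.fst v := hG.dist_triangle
  have t5 : G.dist d.fst d.snd = 1 := SimpleGraph.dist_eq_one_iff_adj.mpr d.adj
  omega

/-- The crux double-counting lemma: on a geodesic, the number of edges in a
part `F i` of a c-partition is minimal among all walks with the same ends. -/
lemma crux {k : ℕ} (hG : G.Connected) (F : Fin k → Set (Sym2 V)) (hF : IsCPartition G F)
    (i : Fin k) {u v : V} (p : G.Walk u v) (hp : p.length = G.dist u v) (w : G.Walk u v) :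
    cnt (F i) p ≤ cnt (F i) w := by
  classical
  set D : V → V → ℤ := fun x y => (G.dist x y : ℤ) with hD
  set dlt : G.Dart → G.Dart → ℤ := fun dp dw =>
    (D dw.snd dp.fst - D dw.snd dp.snd) - (D dw.fst dp.fst - D dw.fst dp.snd) with hdlt
  set dlt' : G.Dart → G.Dart → ℤ := fun dp dw =>
    if dp.edge ∈ F i then dlt dp dw else 0 with hdlt'
  have hθ : ∀ dp dw : G.Dart, dlt dp dw ≠ 0 → theta G dp.edge dw.edge := by
    intro dp dw hne
    refine ⟨dp.edge_mem, dw.edge_mem, dp.fst, dp.snd, dw.fst, dw.snd, rfl, rfl, ?_⟩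
    intro hc
    apply hne
    simp only [hdlt, hD]
    rw [SimpleGraph.dist_comm (u := dw.snd) (v := dp.fst),
      SimpleGraph.dist_comm (u := dw.snd) (v := dp.snd),
      SimpleGraph.dist_comm (u := dw.fst) (v := dp.fst),
      SimpleGraph.dist_comm (u := dw.fst) (v := dp.snd)]
    omega
  have hclass : ∀ e f : Sym2 V, theta G e f → e ∈ F i → f ∈ F i :=
    fun e f h he => hF.2 e f (Relation.TransGen.single h) i he
  -- Step 1: inner sums over w for each dart of p
  have hinner : ∀ dp ∈ p.darts,
      (w.darts.map (dlt' dp)).sum = if dp.edge ∈ F i then 2 else 0 := by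
    intro dp hdp
    by_cases hmem : dp.edge ∈ F i
    · rw [if_pos hmem]
      have hmapeq : w.darts.map (dlt' dp) = w.darts.map (fun dw =>
          (fun z => D z dp.fst - D z dp.snd) dw.snd -
            (fun z => D z dp.fst - D z dp.snd) dw.fst) := by
        apply List.map_congr_left
        intro dw _
        simp only [hdlt', if_pos hmem, hdlt]
      rw [hmapeq, telescope (fun z => D z dp.fst - D z dp.snd) w]
      obtain ⟨g1, g2⟩ := geodesic_dart hG p hp hdp
      simp only [hD]
      rw [SimpleGraph.dist_comm (u := v) (v := dp.fst),
        SimpleGraph.dist_comm (u := v) (v := dp.snd)]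
      omega
    · rw [if_neg hmem]
      apply List.sum_eq_zero
      intro x hx
      obtain ⟨dw, _, rfl⟩ := List.mem_map.mp hx
      simp only [hdlt', if_neg hmem]
  -- Step 2: inner sums over p for each dart of w
  have houter : ∀ dw ∈ w.darts,
      (p.darts.map (fun dp => dlt' dp dw)).sum ≤ if dw.edge ∈ F i then 2 else 0 := by
    intro dw _
    by_cases hmem : dw.edge ∈ F i
    · rw [if_pos hmem]
      have hmapeq : p.darts.map (fun dp => dlt' dp dw) = p.darts.map (fun dp =>
          (fun t => -(D dw.snd t - D dw.fst t)) dp.snd -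
            (fun t => -(D dw.snd t - D dw.fst t)) dp.fst) := by
        apply List.map_congr_left
        intro dp _
        by_cases hdpm : dp.edge ∈ F i
        · simp only [hdlt', if_pos hdpm, hdlt]
          ring
        · have hz : dlt dp dw = 0 := by
            by_contra hnz
            exact hdpm (hclass dw.edge dp.edge (theta_symm (hθ dp dw hnz)) hmem)
          simp only [hdlt', if_neg hdpm]
          have : ((fun t => -(D dw.snd t - D dw.fst t)) dp.snd -
              (fun t => -(D dw.snd t - D dw.fst t)) dp.fst) = dlt dp dw := by
            simp only [hdlt]; ring
          rw [this, hz]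
      rw [hmapeq, telescope (fun t => -(D dw.snd t - D dw.fst t)) p]
      have b1 : G.dist dw.snd u ≤ G.dist dw.snd dw.fst + G.dist dw.fst u := hG.dist_triangle
      have b2 : G.dist dw.fst v ≤ G.dist dw.fst dw.snd + G.dist dw.snd v := hG.dist_triangle
      have b3 : G.dist dw.fst dw.snd = 1 := SimpleGraph.dist_eq_one_iff_adj.mpr dw.adj
      have b4 : G.dist dw.snd dw.fst = 1 := SimpleGraph.dist_eq_one_iff_adj.mpr dw.adj.symm
      simp only [hD]
      omega
    · rw [if_neg hmem]
      apply le_of_eq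
      apply List.sum_eq_zero
      intro x hx
      obtain ⟨dp, _, rfl⟩ := List.mem_map.mp hx
      by_cases hdpm : dp.edge ∈ F i
      · have hz : dlt dp dw = 0 := by
          by_contra hnz
          exact hmem (hclass dp.edge dw.edge (hθ dp dw hnz) hdpm)
        simp only [hdlt', if_pos hdpm, hz]
      · simp only [hdlt', if_neg hdpm]
  -- Combine
  have main : 2 * (cnt (F i) p : ℤ) ≤ 2 * (cnt (F i) w : ℤ) := by
    calc 2 * (cnt (F i) p : ℤ)
        = (p.darts.map (fun dp => if dp.edge ∈ F i then (2 : ℤ) else 0)).sum := by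
          rw [sum_ite_two, cnt_darts]
      _ = (p.darts.map (fun dp => (w.darts.map (dlt' dp)).sum)).sum := by
          rw [List.map_congr_left hinner]
      _ = (w.darts.map (fun dw => (p.darts.map (fun dp => dlt' dp dw)).sum)).sum :=
          sum_swap dlt' p.darts w.darts
      _ ≤ (w.darts.map (fun dw => if dw.edge ∈ F i then (2 : ℤ) else 0)).sum :=
          List.sum_le_sum houter
      _ = 2 * (cnt (F i) w : ℤ) := by rw [sum_ite_two, cnt_darts]
  omega

lemma sum_cnt {k : ℕ} (F : Fin k → Set (Sym2 V)) (hpart : IsEdgePartition G F)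
    {u v : V} (p : G.Walk u v) : ∑ i : Fin k, cnt (F i) p = p.length := by
  induction p with
  | nil => simp [cnt_nil]
  | @cons u w v h q ih =>
    simp only [cnt_cons, SimpleGraph.Walk.length_cons, Finset.sum_add_distrib, ih]
    obtain ⟨j, hj⟩ := hpart.2.1 s(u, w) h
    have hsingle : ∀ i : Fin k, (if s(u, w) ∈ F i then (1 : ℕ) else 0)
        = if i = j then 1 else 0 := by
      intro i
      by_cases hij : i = j
      · subst hij; simp [hj]
      · have : s(u, w) ∉ F i := fun hmem =>
          Set.disjoint_left.mp (hpart.2.2 i j hij) hmem hj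
        simp [this, hij]
    rw [Finset.sum_congr rfl (fun i _ => hsingle i)]
    simp [add_comm]

end DSAux

open DSAux in
/-- for a c-partition `{F₁, …, F_k}` of the edge set of a finite
connected graph `G`, the distance in `G` is the sum of the distances between
the corresponding components in the quotient graphs `G_i = G/F_i`. -/
theorem dist_eq_sum_quotient_dist {V : Type*} [Fintype V] (G : SimpleGraph V)
    (hG : G.Connected) {k : ℕ} (F : Fin k → Set (Sym2 V))
    (hF : IsCPartition G F) (u v : V) :
    G.dist u v = ∑ i : Fin k, (quotientGraph G (F i)).dist
      ((G.deleteEdges (F i)).connectedComponentMk u)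
      ((G.deleteEdges (F i)).connectedComponentMk v) := by
  classical
  obtain ⟨p, hp⟩ := hG.exists_walk_length_eq_dist u v
  have key : ∀ i : Fin k, cnt (F i) p = (quotientGraph G (F i)).dist
      ((G.deleteEdges (F i)).connectedComponentMk u)
      ((G.deleteEdges (F i)).connectedComponentMk v) := by
    intro i
    obtain ⟨q, hq⟩ := exists_quotient_walk (F i) p
    have hle : (quotientGraph G (F i)).dist
        ((G.deleteEdges (F i)).connectedComponentMk u)
        ((G.deleteEdges (F i)).connectedComponentMk v) ≤ cnt (F i) p :=
      le_trans (SimpleGraph.dist_le q) hq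
    have hreach : (quotientGraph G (F i)).Reachable
        ((G.deleteEdges (F i)).connectedComponentMk u)
        ((G.deleteEdges (F i)).connectedComponentMk v) := ⟨q⟩
    obtain ⟨q0, hq0⟩ := hreach.exists_walk_length_eq_dist
    obtain ⟨W, hW⟩ := exists_lift_walk (F i) q0 rfl rfl
    have hcrux := crux hG F hF i p hp W
    omega
  calc G.dist u v = p.length := hp.symm
    _ = ∑ i : Fin k, cnt (F i) p := (sum_cnt F hF.1 p).symm
    _ = _ := Finset.sum_congr rfl (fun i _ => key i)
end
end

section
/- Let G be a finite connected graph and let {F_1, …, F_k} be a c-partition of E(G). If e = uv ∈ F_i, then U = ℓ_i(u) and V = ℓ_i(v) are distinct connected components of G − F_i and they are adjacent vertices in the quotient graph G_i = G/F_i. -/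
open SimpleGraph

noncomputable section

private lemma walk_theta_or_eq {V : Type*} (G : SimpleGraph V) (F : Set (Sym2 V))
    (u : V) :
    ∀ (a v : V) (W : (G.deleteEdges F).Walk a v), s(u, v) ∈ G.edgeSet →
      (∃ e ∈ W.edges, theta G s(u, v) e) ∨
        (G.dist a u + G.dist v v = G.dist a v + G.dist v u) := by
  intro a v W
  induction W with
  | nil => intro _; right; omega
  | @cons x y z hadj W ih =>
    intro hu
    have hxyG : G.Adj x y := ((SimpleGraph.deleteEdges_adj).mp hadj).1
    by_cases hth : G.dist u x + G.dist z y = G.dist u y + G.dist z x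
    · rcases ih hu with ⟨e, he, hte⟩ | heq
      · exact Or.inl ⟨e, by simp [SimpleGraph.Walk.edges_cons, he], hte⟩
      · right
        have h1 : G.dist u x = G.dist x u := SimpleGraph.dist_comm
        have h2 : G.dist z y = G.dist y z := SimpleGraph.dist_comm
        have h3 : G.dist u y = G.dist y u := SimpleGraph.dist_comm
        have h4 : G.dist z x = G.dist x z := SimpleGraph.dist_comm
        omega
    · left
      exact ⟨s(x, y), by simp [SimpleGraph.Walk.edges_cons],
        hu, hxyG, u, z, x, y, rfl, rfl, hth⟩

/-- if `{F₁, …, F_k}` is a c-partition of the edge set of a finite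
connected graph `G` and `e = uv ∈ F_i`, then the components `U = ℓ_i(u)` and
`V = ℓ_i(v)` of `G − F_i` are distinct and adjacent in the quotient graph
`G_i = G/F_i`. -/
theorem components_adj_in_quotient {V : Type*} [Fintype V] (G : SimpleGraph V)
    (hG : G.Connected) {k : ℕ} (F : Fin k → Set (Sym2 V))
    (hF : IsCPartition G F) (i : Fin k) (u v : V) (he : s(u, v) ∈ F i) :
    (G.deleteEdges (F i)).connectedComponentMk u ≠
        (G.deleteEdges (F i)).connectedComponentMk v ∧
      (quotientGraph G (F i)).Adj
        ((G.deleteEdges (F i)).connectedComponentMk u)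
        ((G.deleteEdges (F i)).connectedComponentMk v) := by
  have heG : s(u, v) ∈ G.edgeSet := hF.1.1 i he
  have hadj : G.Adj u v := heG
  have hne : (G.deleteEdges (F i)).connectedComponentMk u ≠
      (G.deleteEdges (F i)).connectedComponentMk v := by
    intro hcomp
    have hreach : (G.deleteEdges (F i)).Reachable u v :=
      SimpleGraph.ConnectedComponent.exact hcomp
    obtain ⟨W⟩ := hreach
    rcases walk_theta_or_eq G (F i) u u v W heG with ⟨e, heW, hte⟩ | heq
    · have heFi : e ∈ F i := hF.2 s(u, v) e (Relation.TransGen.single hte) i he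
      have : e ∈ (G.deleteEdges (F i)).edgeSet := W.edges_subset_edgeSet heW
      rw [SimpleGraph.edgeSet_deleteEdges] at this
      exact this.2 heFi
    · have h0 : G.dist u u = 0 := by simp
      have h1 : G.dist v v = 0 := by simp
      have h2 : G.dist v u = G.dist u v := SimpleGraph.dist_comm
      have hpos : 0 < G.dist u v :=
        hG.pos_dist_of_ne hadj.ne
      omega
  exact ⟨hne, hne, u, v, rfl, rfl, hadj⟩
end
end

section
/- Let G be a finite connected graph, {F_1, …, F_k} a c-partition of E(G), and e = uv ∈ F_i. Then for every vertex z ∈ V(G), the following identity of integers holds: d_G(z,u) − d_G(z,v) = d_{G_i}(ℓ_i(z), ℓ_i(u)) − d_{G_i}(ℓ_i(z), ℓ_i(v)), where G_i = G/F_i. -/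
open SimpleGraph

noncomputable section

section CutMethod3

attribute [local instance] Classical.propDecidable

variable {V : Type*} {G : SimpleGraph V}

def fcnt (F : Set (Sym2 V)) {x y : V} (W : G.Walk x y) : ℤ :=
  (W.darts.map (fun d => if s(d.fst, d.snd) ∈ F then (1 : ℤ) else 0)).sum

lemma fcnt_nil {F : Set (Sym2 V)} {x : V} : fcnt F (Walk.nil : G.Walk x x) = 0 := by
  simp [fcnt]

lemma fcnt_cons {F : Set (Sym2 V)} {x c y : V} (h : G.Adj x c) (W : G.Walk c y) :
    fcnt F (Walk.cons h W) = (if s(x, c) ∈ F then 1 else 0) + fcnt F W := by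
  simp [fcnt]

lemma fcnt_append {F : Set (Sym2 V)} {x y z : V} (W₁ : G.Walk x y) (W₂ : G.Walk y z) :
    fcnt F (W₁.append W₂) = fcnt F W₁ + fcnt F W₂ := by
  simp [fcnt, SimpleGraph.Walk.darts_append]

lemma quot_reachable (hG : G.Connected) (F : Set (Sym2 V)) (x y : V) :
    (quotientGraph G F).Reachable ((G.deleteEdges F).connectedComponentMk x)
      ((G.deleteEdges F).connectedComponentMk y) := by
  obtain ⟨W⟩ := hG.preconnected x y
  induction W with
  | nil => exact Reachable.refl _
  | cons h p ih =>
    rename_i a c z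
    refine Reachable.trans ?_ ih
    by_cases he : (G.deleteEdges F).connectedComponentMk a
        = (G.deleteEdges F).connectedComponentMk c
    · rw [he]
    · exact SimpleGraph.Adj.reachable ⟨he, a, c, rfl, rfl, h⟩

lemma quot_connected (hG : G.Connected) (F : Set (Sym2 V)) :
    (quotientGraph G F).Connected := by
  have hne : Nonempty V := hG.nonempty
  rw [SimpleGraph.connected_iff]
  refine ⟨?_, ⟨(G.deleteEdges F).connectedComponentMk hne.some⟩⟩
  intro X Y
  obtain ⟨x, hx⟩ := Quot.exists_rep X
  obtain ⟨y, hy⟩ := Quot.exists_rep Y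
  rw [← hx, ← hy]
  exact quot_reachable hG F x y

lemma proj (hG : G.Connected) (F : Set (Sym2 V)) :
    ∀ {x y : V} (W : G.Walk x y),
      (((quotientGraph G F).dist ((G.deleteEdges F).connectedComponentMk x)
        ((G.deleteEdges F).connectedComponentMk y)) : ℤ) ≤ fcnt F W := by
  intro x y W
  induction W with
  | nil => simp [fcnt_nil, SimpleGraph.dist_self]
  | cons h p ih =>
    rename_i a c z
    rw [fcnt_cons]
    by_cases hf : s(a, c) ∈ F
    · have hQc := quot_connected hG F
      have htri : (quotientGraph G F).dist ((G.deleteEdges F).connectedComponentMk a)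
            ((G.deleteEdges F).connectedComponentMk z)
          ≤ (quotientGraph G F).dist ((G.deleteEdges F).connectedComponentMk a)
              ((G.deleteEdges F).connectedComponentMk c)
            + (quotientGraph G F).dist ((G.deleteEdges F).connectedComponentMk c)
              ((G.deleteEdges F).connectedComponentMk z) := hQc.dist_triangle
      have hone : (quotientGraph G F).dist ((G.deleteEdges F).connectedComponentMk a)
          ((G.deleteEdges F).connectedComponentMk c) ≤ 1 := by
        by_cases he : (G.deleteEdges F).connectedComponentMk a
            = (G.deleteEdges F).connectedComponentMk c
        · rw [he]; simp [SimpleGraph.dist_self]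
        · have hadj : (quotientGraph G F).Adj ((G.deleteEdges F).connectedComponentMk a)
              ((G.deleteEdges F).connectedComponentMk c) := ⟨he, a, c, rfl, rfl, h⟩
          simpa using SimpleGraph.dist_le (SimpleGraph.Walk.cons hadj SimpleGraph.Walk.nil)
      rw [if_pos hf]
      omega
    · have he : (G.deleteEdges F).connectedComponentMk a
          = (G.deleteEdges F).connectedComponentMk c :=
        ConnectedComponent.connectedComponentMk_eq_of_adj
          (by rw [SimpleGraph.deleteEdges_adj]; exact ⟨h, hf⟩)
      rw [if_neg hf, he]
      simpa using ih

lemma zero_walk {F : Set (Sym2 V)} :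
    ∀ {x y : V}, (G.deleteEdges F).Walk x y → ∃ W : G.Walk x y, fcnt F W = 0 := by
  intro x y W'
  induction W' with
  | nil => exact ⟨SimpleGraph.Walk.nil, fcnt_nil⟩
  | cons h p ih =>
    obtain ⟨W, hW⟩ := ih
    rw [SimpleGraph.deleteEdges_adj] at h
    exact ⟨SimpleGraph.Walk.cons h.1 W, by rw [fcnt_cons, if_neg h.2, hW, add_zero]⟩

lemma lift_walk {F : Set (Sym2 V)} :
    ∀ {X Y} (w : (quotientGraph G F).Walk X Y) {x y : V},
      (G.deleteEdges F).connectedComponentMk x = X →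
      (G.deleteEdges F).connectedComponentMk y = Y →
      ∃ W : G.Walk x y, fcnt F W ≤ (w.length : ℤ) := by
  intro X Y w
  induction w with
  | nil =>
    intro x y hx hy
    obtain ⟨W'⟩ := ConnectedComponent.exact (hx.trans hy.symm)
    obtain ⟨W, hW⟩ := zero_walk W'
    exact ⟨W, by simp [hW]⟩
  | cons hAdj w ih =>
    intro x y hx hy
    obtain ⟨hne, p, q, hp, hq, hpq⟩ := hAdj
    obtain ⟨W₁, h₁⟩ := zero_walk (ConnectedComponent.exact (hx.trans hp.symm)).some
    obtain ⟨W₂, h₂⟩ := ih hq hy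
    refine ⟨W₁.append (SimpleGraph.Walk.cons hpq W₂), ?_⟩
    rw [fcnt_append, fcnt_cons, h₁]
    have hle : (if s(p, q) ∈ F then (1:ℤ) else 0) ≤ 1 := by split <;> norm_num
    show _ ≤ ((w.length + 1 : ℕ) : ℤ)
    push_cast
    omega

end CutMethod3

section CutMethodX
attribute [local instance] Classical.propDecidable
variable {V : Type*} {G : SimpleGraph V}
lemma chi_const {F : Set (Sym2 V)} (hFE : F ⊆ G.edgeSet)
    (hFcl : ∀ h ∈ F, ∀ e, theta G h e → e ∈ F)
    {a b : V} (hab : s(a, b) ∈ F) {p q : V} (hpq : G.Adj p q) (hnF : s(p, q) ∉ F) :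
    (G.dist p a : ℤ) - G.dist p b = (G.dist q a : ℤ) - G.dist q b := by
  have hth : G.dist a p + G.dist b q = G.dist a q + G.dist b p := by
    by_contra hne
    exact hnF (hFcl _ hab _ ⟨hFE hab, G.mem_edgeSet.mpr hpq, a, b, p, q, rfl, rfl, hne⟩)
  have e1 : G.dist a p = G.dist p a := SimpleGraph.dist_comm
  have e2 : G.dist b q = G.dist q b := SimpleGraph.dist_comm
  have e3 : G.dist a q = G.dist q a := SimpleGraph.dist_comm
  have e4 : G.dist b p = G.dist p b := SimpleGraph.dist_comm
  omega

lemma tele_dist {F : Set (Sym2 V)} (hFE : F ⊆ G.edgeSet)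
    (hFcl : ∀ h ∈ F, ∀ e, theta G h e → e ∈ F)
    {a b : V} (hab : s(a, b) ∈ F) :
    ∀ {x y : V} (W : G.Walk x y),
      (W.darts.map (fun d => if s(d.fst, d.snd) ∈ F then
          ((G.dist d.snd a : ℤ) - G.dist d.snd b) - ((G.dist d.fst a : ℤ) - G.dist d.fst b)
        else 0)).sum
      = ((G.dist y a : ℤ) - G.dist y b) - ((G.dist x a : ℤ) - G.dist x b) := by
  intro x y W
  induction W with
  | nil => simp
  | cons h W ih =>
    rename_i p r z
    simp only [SimpleGraph.Walk.darts_cons, List.map_cons, List.sum_cons, ih]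
    by_cases hf : s(p, r) ∈ F
    · simp only [hf, if_true]
      ring
    · simp only [hf, if_false]
      have := chi_const hFE hFcl hab h hf
      omega

end CutMethodX

section CutMethod2

attribute [local instance] Classical.propDecidable

variable {V : Type*} {G : SimpleGraph V}

lemma geo (hG : G.Connected) :
    ∀ {x y : V} (P : G.Walk x y), P.length = G.dist x y →
      ∀ d ∈ P.darts,
        (G.dist x d.fst + 1 = G.dist x d.snd ∧ G.dist d.snd y + 1 = G.dist d.fst y) ∧
        (G.dist x d.fst + G.dist d.fst y = G.dist x y ∧
          G.dist x d.snd + G.dist d.snd y = G.dist x y) := by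
  intro x y P
  induction P with
  | nil => intro _ d hd; simp at hd
  | cons h p ih =>
    rename_i a c z
    intro hP d hd
    have hac : G.dist a c = 1 := SimpleGraph.dist_eq_one_iff_adj.mpr h
    have hlen : p.length + 1 = G.dist a z := by simpa using hP
    have hdcy : G.dist c z ≤ p.length := SimpleGraph.dist_le p
    have htri : G.dist a z ≤ G.dist a c + G.dist c z := hG.dist_triangle
    have hp' : p.length = G.dist c z := by omega
    have haz : G.dist a z = G.dist c z + 1 := by omega
    rw [SimpleGraph.Walk.darts_cons, List.mem_cons] at hd
    rcases hd with rfl | hd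
    · refine ⟨⟨?_, ?_⟩, ?_, ?_⟩ <;> simp [SimpleGraph.dist_self, hac, haz] <;> try omega
    · obtain ⟨⟨h1, h2⟩, h3, h4⟩ := ih hp' d hd
      have t1 : G.dist a d.fst ≤ G.dist a c + G.dist c d.fst := hG.dist_triangle
      have t2 : G.dist a d.snd ≤ G.dist a c + G.dist c d.snd := hG.dist_triangle
      have t3 : G.dist a z ≤ G.dist a d.fst + G.dist d.fst z := hG.dist_triangle
      have t4 : G.dist a z ≤ G.dist a d.snd + G.dist d.snd z := hG.dist_triangle
      refine ⟨⟨?_, ?_⟩, ?_, ?_⟩ <;> omega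

end CutMethod2

section CutMethod4

attribute [local instance] Classical.propDecidable

variable {V : Type*} {G : SimpleGraph V}

lemma sum_map_add {α : Type*} (l : List α) (f g : α → ℤ) :
    (l.map fun a => f a + g a).sum = (l.map f).sum + (l.map g).sum := by
  induction l with
  | nil => simp
  | cons a l ih => simp [ih]; ring

lemma sum_swap {α β : Type*} (l₁ : List α) (l₂ : List β) (f : α → β → ℤ) :
    (l₁.map fun a => (l₂.map (f a)).sum).sum
      = (l₂.map fun b => (l₁.map fun a => f a b).sum).sum := by
  induction l₁ with
  | nil => simp
  | cons a l ih =>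
    simp only [List.map_cons, List.sum_cons, ih, sum_map_add]

lemma sum_if_two {α : Type*} (l : List α) (c : α → Prop) :
    (l.map fun a => if c a then (2:ℤ) else 0).sum
      = 2 * (l.map fun a => if c a then (1:ℤ) else 0).sum := by
  induction l with
  | nil => simp
  | cons a l ih => by_cases h : c a <;> simp [h, ih] <;> ring

lemma count_eq (hG : G.Connected) {F : Set (Sym2 V)} (hFE : F ⊆ G.edgeSet)
    (hFcl : ∀ h ∈ F, ∀ e, theta G h e → e ∈ F)
    {x y : V} (P : G.Walk x y) (hP : P.length = G.dist x y) :
    fcnt F P = (((quotientGraph G F).dist ((G.deleteEdges F).connectedComponentMk x)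
      ((G.deleteEdges F).connectedComponentMk y)) : ℤ) := by
  refine le_antisymm ?_ (proj hG F P)
  obtain ⟨w, hw⟩ := (quot_reachable hG F x y).exists_walk_length_eq_dist
  obtain ⟨W, hW⟩ := lift_walk w rfl rfl
  set J : G.Dart → G.Dart → ℤ := fun d d' =>
    if s(d.fst, d.snd) ∈ F then
      (if s(d'.fst, d'.snd) ∈ F then
        ((G.dist d'.snd d.fst : ℤ) - G.dist d'.snd d.snd)
          - ((G.dist d'.fst d.fst : ℤ) - G.dist d'.fst d.snd) else 0)
    else 0 with hJ
  have hA : ∀ d ∈ P.darts, (W.darts.map (J d)).sum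
      = if s(d.fst, d.snd) ∈ F then (2:ℤ) else 0 := by
    intro d hd
    by_cases hfd : s(d.fst, d.snd) ∈ F
    · rw [if_pos hfd]
      have hfun : (W.darts.map (J d)) = (W.darts.map (fun d' =>
          if s(d'.fst, d'.snd) ∈ F then
            ((G.dist d'.snd d.fst : ℤ) - G.dist d'.snd d.snd)
              - ((G.dist d'.fst d.fst : ℤ) - G.dist d'.fst d.snd) else 0)) := by
        apply List.map_congr_left
        intro d' _
        simp [hJ, hfd]
      rw [hfun, tele_dist hFE hFcl hfd W]
      obtain ⟨⟨g1, g2⟩, -, -⟩ := geo hG P hP d hd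
      have c1 : G.dist y d.fst = G.dist d.fst y := SimpleGraph.dist_comm
      have c2 : G.dist y d.snd = G.dist d.snd y := SimpleGraph.dist_comm
      omega
    · rw [if_neg hfd]
      have hfun : (W.darts.map (J d)) = W.darts.map (fun _ => (0:ℤ)) := by
        apply List.map_congr_left
        intro d' _
        simp [hJ, hfd]
      rw [hfun]
      simp
  have hB : ∀ d' ∈ W.darts, (P.darts.map (fun d => J d d')).sum
      ≤ if s(d'.fst, d'.snd) ∈ F then (2:ℤ) else 0 := by
    intro d' _
    by_cases hfd' : s(d'.fst, d'.snd) ∈ F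
    · rw [if_pos hfd']
      have hfun : (P.darts.map (fun d => J d d')) = (P.darts.map (fun d =>
          if s(d.fst, d.snd) ∈ F then
            ((G.dist d.snd d'.fst : ℤ) - G.dist d.snd d'.snd)
              - ((G.dist d.fst d'.fst : ℤ) - G.dist d.fst d'.snd) else 0)) := by
        apply List.map_congr_left
        intro d _
        by_cases hfd : s(d.fst, d.snd) ∈ F
        · simp only [hJ, if_pos hfd, if_pos hfd']
          have c1 : G.dist d'.snd d.fst = G.dist d.fst d'.snd := SimpleGraph.dist_comm
          have c2 : G.dist d'.snd d.snd = G.dist d.snd d'.snd := SimpleGraph.dist_comm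
          have c3 : G.dist d'.fst d.fst = G.dist d.fst d'.fst := SimpleGraph.dist_comm
          have c4 : G.dist d'.fst d.snd = G.dist d.snd d'.fst := SimpleGraph.dist_comm
          omega
        · simp only [hJ, if_neg hfd]
      rw [hfun, tele_dist hFE hFcl hfd' P]
      have h1 : G.dist d'.fst d'.snd = 1 := SimpleGraph.dist_eq_one_iff_adj.mpr d'.adj
      have h2 : G.dist d'.snd d'.fst = 1 := by
        rw [SimpleGraph.dist_comm]; exact h1
      have t1 : G.dist y d'.fst ≤ G.dist y d'.snd + G.dist d'.snd d'.fst := hG.dist_triangle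
      have t2 : G.dist x d'.snd ≤ G.dist x d'.fst + G.dist d'.fst d'.snd := hG.dist_triangle
      omega
    · have hfun : (P.darts.map (fun d => J d d')) = P.darts.map (fun _ => (0:ℤ)) := by
        apply List.map_congr_left
        intro d _
        simp [hJ, hfd']
      rw [if_neg hfd', hfun]
      simp
  have key : 2 * fcnt F P ≤ 2 * fcnt F W := by
    calc 2 * fcnt F P
        = (P.darts.map (fun d => if s(d.fst, d.snd) ∈ F then (2:ℤ) else 0)).sum :=
          (sum_if_two _ _).symm
      _ = (P.darts.map (fun d => (W.darts.map (J d)).sum)).sum :=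
          (congrArg List.sum (List.map_congr_left hA)).symm
      _ = (W.darts.map (fun d' => (P.darts.map (fun d => J d d')).sum)).sum :=
          sum_swap _ _ _
      _ ≤ (W.darts.map (fun d' => if s(d'.fst, d'.snd) ∈ F then (2:ℤ) else 0)).sum :=
          List.sum_le_sum hB
      _ = 2 * fcnt F W := sum_if_two _ _
  omega

end CutMethod4

section CutMethod5

attribute [local instance] Classical.propDecidable

variable {V : Type*} {G : SimpleGraph V}

lemma fcnt_total {k : ℕ} {F : Fin k → Set (Sym2 V)}
    (hcover : ∀ e ∈ G.edgeSet, ∃ j, e ∈ F j)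
    (hdisj : ∀ j j', j ≠ j' → Disjoint (F j) (F j')) :
    ∀ {x y : V} (W : G.Walk x y), ∑ j : Fin k, fcnt (F j) W = (W.length : ℤ) := by
  intro x y W
  induction W with
  | nil => simp [fcnt_nil]
  | cons h p ih =>
    rename_i a c z
    obtain ⟨j₀, hj₀⟩ := hcover _ (G.mem_edgeSet.mpr h)
    have hone : ∑ j : Fin k, (if s(a, c) ∈ F j then (1:ℤ) else 0) = 1 := by
      rw [Finset.sum_eq_single j₀]
      · rw [if_pos hj₀]
      · intro j _ hj
        exact if_neg (fun hmem' => (Set.disjoint_left.mp (hdisj j j₀ hj) hmem') hj₀)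
      · intro hni; exact absurd (Finset.mem_univ j₀) hni
    simp only [fcnt_cons, Finset.sum_add_distrib, hone, ih, SimpleGraph.Walk.length_cons]
    push_cast
    ring

theorem dist_sub_dist_eq_quotient' {V : Type*} [Fintype V] (G : SimpleGraph V)
    (hG : G.Connected) {k : ℕ} (F : Fin k → Set (Sym2 V))
    (hF : (∀ i, F i ⊆ G.edgeSet) ∧ (∀ e ∈ G.edgeSet, ∃ i, e ∈ F i) ∧
      (∀ i j, i ≠ j → Disjoint (F i) (F j)))
    (hstar : ∀ e f : Sym2 V, Relation.TransGen (theta G) e f → ∀ i, e ∈ F i → f ∈ F i)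
    (i : Fin k) (u v : V) (he : s(u, v) ∈ F i)
    (z : V) :
    (G.dist z u : ℤ) - (G.dist z v : ℤ) =
      ((quotientGraph G (F i)).dist
          ((G.deleteEdges (F i)).connectedComponentMk z)
          ((G.deleteEdges (F i)).connectedComponentMk u) : ℤ) -
        ((quotientGraph G (F i)).dist
          ((G.deleteEdges (F i)).connectedComponentMk z)
          ((G.deleteEdges (F i)).connectedComponentMk v) : ℤ) := by
  obtain ⟨hsub, hcover, hdisj⟩ := hF
  have hcl : ∀ j : Fin k, ∀ h ∈ F j, ∀ e, theta G h e → e ∈ F j :=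
    fun j h hh e hth => hstar h e (Relation.TransGen.single hth) j hh
  obtain ⟨P, hP⟩ := hG.exists_walk_length_eq_dist z u
  obtain ⟨Q', hQ'⟩ := hG.exists_walk_length_eq_dist z v
  have hu : (G.dist z u : ℤ) = ∑ j : Fin k,
      (((quotientGraph G (F j)).dist ((G.deleteEdges (F j)).connectedComponentMk z)
        ((G.deleteEdges (F j)).connectedComponentMk u)) : ℤ) := by
    rw [← hP]
    rw [← fcnt_total hcover hdisj P]
    exact Finset.sum_congr rfl fun j _ => count_eq hG (hsub j) (hcl j) P hP
  have hv : (G.dist z v : ℤ) = ∑ j : Fin k,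
      (((quotientGraph G (F j)).dist ((G.deleteEdges (F j)).connectedComponentMk z)
        ((G.deleteEdges (F j)).connectedComponentMk v)) : ℤ) := by
    rw [← hQ']
    rw [← fcnt_total hcover hdisj Q']
    exact Finset.sum_congr rfl fun j _ => count_eq hG (hsub j) (hcl j) Q' hQ'
  rw [hu, hv, ← Finset.sum_sub_distrib]
  refine Finset.sum_eq_single i ?_ ?_
  · intro j _ hji
    have hnot : s(u, v) ∉ F j := fun hmem => (Set.disjoint_left.mp (hdisj j i hji) hmem) he
    have hadjuv : G.Adj u v := G.mem_edgeSet.mp (hsub i he)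
    have hcc : (G.deleteEdges (F j)).connectedComponentMk u
        = (G.deleteEdges (F j)).connectedComponentMk v :=
      ConnectedComponent.connectedComponentMk_eq_of_adj
        (by rw [SimpleGraph.deleteEdges_adj]; exact ⟨hadjuv, hnot⟩)
    rw [hcc]
    ring
  · intro hni; exact absurd (Finset.mem_univ i) hni

end CutMethod5

/-- if `{F₁, …, F_k}` is a c-partition of the edge set of a finite
connected graph `G` and `e = uv ∈ F_i`, then for every vertex `z` one has, in
the integers, `d_G(z,u) − d_G(z,v) = d_{G_i}(ℓ_i(z),ℓ_i(u)) − d_{G_i}(ℓ_i(z),ℓ_i(v))`. -/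
theorem dist_sub_dist_eq_quotient {V : Type*} [Fintype V] (G : SimpleGraph V)
    (hG : G.Connected) {k : ℕ} (F : Fin k → Set (Sym2 V))
    (hF : IsCPartition G F) (i : Fin k) (u v : V) (he : s(u, v) ∈ F i)
    (z : V) :
    (G.dist z u : ℤ) - (G.dist z v : ℤ) =
      ((quotientGraph G (F i)).dist
          ((G.deleteEdges (F i)).connectedComponentMk z)
          ((G.deleteEdges (F i)).connectedComponentMk u) : ℤ) -
        ((quotientGraph G (F i)).dist
          ((G.deleteEdges (F i)).connectedComponentMk z)
          ((G.deleteEdges (F i)).connectedComponentMk v) : ℤ) := by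
  obtain ⟨hpart, hstar⟩ := hF
  exact dist_sub_dist_eq_quotient' G hG F hpart hstar i u v he z
end
end

section
/- Let G be a finite connected graph, {F_1, …, F_k} a c-partition of E(G), and e = uv ∈ F_i. Set U = ℓ_i(u), V = ℓ_i(v), so that E = UV is an edge of G_i = G/F_i. Then for every vertex z ∈ V(G): z ∈ N_u(e|G) if and only if ℓ_i(z) ∈ N_U(E|G_i). -/
open SimpleGraph

noncomputable section

namespace Aux

attribute [local instance] Classical.propDecidable

variable {V : Type*} {G : SimpleGraph V}

/-- number of edges of a walk lying in `F` (with multiplicity) -/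
def cnt (F : Set (Sym2 V)) : ∀ {a b : V}, G.Walk a b → ℕ
  | _, _, .nil => 0
  | _, _, .cons (u := a) (v := c) _ W => (if s(a, c) ∈ F then 1 else 0) + cnt F W

@[simp] lemma cnt_nil (F : Set (Sym2 V)) (a : V) : cnt F (Walk.nil' a (G := G)) = 0 := rfl

@[simp] lemma cnt_cons (F : Set (Sym2 V)) {a c b : V} (h : G.Adj a c) (W : G.Walk c b) :
    cnt F (Walk.cons h W) = (if s(a, c) ∈ F then 1 else 0) + cnt F W := rfl

lemma cnt_append (F : Set (Sym2 V)) {a b c : V} (P : G.Walk a b) (Q : G.Walk b c) :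
    cnt F (P.append Q) = cnt F P + cnt F Q := by
  induction P with
  | nil => simp [cnt]
  | cons h P ih => simp [Walk.cons_append, cnt, ih]; ring

/-- the potential function Φ associated to a walk `P` -/
def phi (F : Set (Sym2 V)) : ∀ {x y : V}, G.Walk x y → V → ℤ
  | _, _, .nil => fun _ => 0
  | x, _, .cons (v := x₁) _ P => fun w =>
      ((if s(x, x₁) ∈ F then (G.dist w x : ℤ) - (G.dist w x₁ : ℤ) else 0) + phi F P w)

@[simp] lemma phi_nil (F : Set (Sym2 V)) (x w : V) : phi F (Walk.nil' x (G := G)) w = 0 := rfl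

@[simp] lemma phi_cons (F : Set (Sym2 V)) {x x₁ y : V} (h : G.Adj x x₁) (P : G.Walk x₁ y) (w : V) :
    phi F (Walk.cons h P) w =
      (if s(x, x₁) ∈ F then (G.dist w x : ℤ) - (G.dist w x₁ : ℤ) else 0) + phi F P w := rfl

end Aux

namespace Aux2

attribute [local instance] Classical.propDecidable

open Aux

variable {V : Type*} {G : SimpleGraph V} {F : Set (Sym2 V)}

lemma no_jump (hcl : ∀ e ∈ F, ∀ f, theta G e f → f ∈ F)
    {x x₁ c d : V} (hx : G.Adj x x₁) (hcd : G.Adj c d)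
    (hmem : (s(x, x₁) ∈ F ∧ s(c, d) ∉ F) ∨ (s(x, x₁) ∉ F ∧ s(c, d) ∈ F)) :
    (G.dist c x : ℤ) - (G.dist c x₁ : ℤ) = (G.dist d x : ℤ) - (G.dist d x₁ : ℤ) := by
  by_contra hne
  have h1 : G.dist x c + G.dist x₁ d ≠ G.dist x d + G.dist x₁ c := by
    have e1 := G.dist_comm (u := c) (v := x)
    have e2 := G.dist_comm (u := c) (v := x₁)
    have e3 := G.dist_comm (u := d) (v := x)
    have e4 := G.dist_comm (u := d) (v := x₁)
    omega
  have h2 : G.dist c x + G.dist d x₁ ≠ G.dist c x₁ + G.dist d x := by omega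
  have t1 : theta G s(x, x₁) s(c, d) :=
    ⟨G.mem_edgeSet.mpr hx, G.mem_edgeSet.mpr hcd, x, x₁, c, d, rfl, rfl, h1⟩
  have t2 : theta G s(c, d) s(x, x₁) :=
    ⟨G.mem_edgeSet.mpr hcd, G.mem_edgeSet.mpr hx, c, d, x, x₁, rfl, rfl, h2⟩
  rcases hmem with ⟨hin, hout⟩ | ⟨hout, hin⟩
  · exact hout (hcl _ hin _ t1)
  · exact hout (hcl _ hin _ t2)

/-- variation of `phi` across an `F`-edge -/
lemma phi_jump (hcl : ∀ e ∈ F, ∀ f, theta G e f → f ∈ F)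
    {x y c d : V} (P : G.Walk x y) (hcd : G.Adj c d) (hcdF : s(c, d) ∈ F) :
    phi F P d - phi F P c =
      ((G.dist d x : ℤ) - (G.dist d y : ℤ)) - ((G.dist c x : ℤ) - (G.dist c y : ℤ)) := by
  induction P with
  | nil => simp
  | @cons x x₁ y h P ih =>
    by_cases hxF : s(x, x₁) ∈ F
    · simp only [phi_cons, if_pos hxF]
      omega
    · simp only [phi_cons, if_neg hxF]
      have := no_jump hcl h hcd (Or.inr ⟨hxF, hcdF⟩)
      omega

/-- `phi` is constant across non-`F` edges -/
lemma phi_const (hcl : ∀ e ∈ F, ∀ f, theta G e f → f ∈ F)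
    {x y c d : V} (P : G.Walk x y) (hcd : G.Adj c d) (hcdF : s(c, d) ∉ F) :
    phi F P c = phi F P d := by
  induction P with
  | nil => simp
  | @cons x x₁ y h P ih =>
    by_cases hxF : s(x, x₁) ∈ F
    · have := no_jump hcl h hcd (Or.inl ⟨hxF, hcdF⟩)
      simp only [phi_cons, if_pos hxF]
      omega
    · simp only [phi_cons, if_neg hxF]
      omega

end Aux2

namespace Aux3

attribute [local instance] Classical.propDecidable

open Aux Aux2

variable {V : Type*} {G : SimpleGraph V} {F : Set (Sym2 V)}

lemma adj_dist_le (hG : G.Connected) {c d : V} (h : G.Adj c d) (w : V) :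
    G.dist c w ≤ G.dist d w + 1 := by
  have := hG.dist_triangle (u := c) (v := d) (w := w)
  have : G.dist c d = 1 := SimpleGraph.dist_eq_one_iff_adj.mpr h
  omega

lemma phi_walk_le (hG : G.Connected) (hcl : ∀ e ∈ F, ∀ f, theta G e f → f ∈ F)
    {x y : V} (P : G.Walk x y) :
    ∀ {a b : V} (W : G.Walk a b), phi F P b - phi F P a ≤ 2 * cnt F W := by
  intro a b W
  induction W with
  | nil => simp
  | @cons a a₁ b h W ih =>
    by_cases haF : s(a, a₁) ∈ F
    · have hj := phi_jump hcl P h haF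
      have b1 := adj_dist_le hG h x
      have b2 := adj_dist_le hG h.symm x
      have b3 := adj_dist_le hG h y
      have b4 := adj_dist_le hG h.symm y
      simp only [cnt_cons, if_pos haF]
      omega
    · have hc := phi_const hcl P h haF
      simp only [cnt_cons, if_neg haF]
      omega

lemma phi_geodesic (hG : G.Connected) (hcl : ∀ e ∈ F, ∀ f, theta G e f → f ∈ F) :
    ∀ {x y : V} (P : G.Walk x y), P.length = G.dist x y →
      phi F P y - phi F P x = 2 * cnt F P := by
  intro x y P
  induction P with
  | nil => simp
  | @cons x x₁ y h P ih =>
    intro hlen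
    simp only [Walk.length_cons] at hlen
    have hd1 : G.dist x x₁ = 1 := SimpleGraph.dist_eq_one_iff_adj.mpr h
    have htri : G.dist x y ≤ G.dist x x₁ + G.dist x₁ y := hG.dist_triangle
    have hle : G.dist x₁ y ≤ P.length := G.dist_le P
    have hlen' : P.length = G.dist x₁ y := by omega
    have ihv := ih hlen'
    have hcomm1 : G.dist y x = G.dist x y := G.dist_comm
    have hcomm2 : G.dist y x₁ = G.dist x₁ y := G.dist_comm
    have hself : G.dist x x = 0 := by simp
    have hself1 : G.dist x₁ x₁ = 0 := by simp
    by_cases hxF : s(x, x₁) ∈ F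
    · have hj := phi_jump hcl P h hxF
      simp only [phi_cons, if_pos hxF, cnt_cons, if_pos hxF]
      have hxy : G.dist x y = P.length + 1 := hlen.symm
      push_cast
      omega
    · have hc := phi_const hcl P h hxF
      simp only [phi_cons, if_neg hxF, cnt_cons, if_neg hxF]
      omega

end Aux3

namespace Aux4

attribute [local instance] Classical.propDecidable

open Aux Aux2 Aux3

variable {V : Type*} {G : SimpleGraph V} {F : Set (Sym2 V)}


/-- projection of a walk to the quotient -/
lemma exists_quotient_walk {a b : V} (W : G.Walk a b) :
    ∃ qw : (quotientGraph G F).Walk ((G.deleteEdges F).connectedComponentMk a) ((G.deleteEdges F).connectedComponentMk b), qw.length ≤ cnt F W := by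
  induction W with
  | nil => exact ⟨Walk.nil, by simp⟩
  | @cons a a₁ b h W ih =>
    obtain ⟨qw, hq⟩ := ih
    by_cases heq : (G.deleteEdges F).connectedComponentMk a = (G.deleteEdges F).connectedComponentMk a₁
    · refine ⟨qw.copy heq.symm rfl, ?_⟩
      simp only [Walk.length_copy, cnt_cons]
      omega
    · have haF : s(a, a₁) ∈ F := by
        by_contra hnF
        exact heq (ConnectedComponent.sound ((SimpleGraph.deleteEdges_adj.mpr ⟨h, hnF⟩).reachable))
      refine ⟨Walk.cons ⟨heq, a, a₁, rfl, rfl, h⟩ qw, ?_⟩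
      simp only [Walk.length_cons, cnt_cons, if_pos haF]
      refine le_trans (Nat.le_of_eq (Walk.length_cons _ _)) ?_
      omega

lemma cnt_eq_zero {a b : V} (W : G.Walk a b) (h : ∀ e ∈ W.edges, e ∉ F) :
    cnt F W = 0 := by
  induction W with
  | nil => simp
  | @cons a a₁ b hadj W ih =>
    simp only [Walk.edges_cons, List.mem_cons] at h
    have := ih fun e he => h e (Or.inr he)
    simp only [cnt_cons, if_neg (h _ (Or.inl rfl))]
    omega

/-- a walk in `G − F` gives a walk in `G` with no `F`-edges -/
lemma exists_zero_walk {a b : V} (hab : (G.deleteEdges F).connectedComponentMk a = (G.deleteEdges F).connectedComponentMk b) :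
    ∃ W : G.Walk a b, cnt F W = 0 := by
  obtain ⟨p⟩ := ConnectedComponent.exact hab
  have hp : ∀ e ∈ p.edges, e ∈ G.edgeSet := fun e he => by
    have := p.edges_subset_edgeSet he
    rw [SimpleGraph.edgeSet_deleteEdges] at this
    exact this.1
  refine ⟨p.transfer G hp, cnt_eq_zero _ fun e he => ?_⟩
  rw [Walk.edges_transfer] at he
  have := p.edges_subset_edgeSet he
  rw [SimpleGraph.edgeSet_deleteEdges] at this
  exact this.2

/-- lifting a quotient walk -/
lemma exists_lift_walk : ∀ {X Y : (G.deleteEdges F).ConnectedComponent}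
    (qw : (quotientGraph G F).Walk X Y) (a b : V), (G.deleteEdges F).connectedComponentMk a = X → (G.deleteEdges F).connectedComponentMk b = Y →
    ∃ W : G.Walk a b, cnt F W ≤ qw.length := by
  intro X Y qw
  induction qw with
  | nil =>
    intro a b ha hb
    obtain ⟨W, hW⟩ := exists_zero_walk (F := F) (ha.trans hb.symm)
    exact ⟨W, by simp [hW]⟩
  | @cons X X' Y hadj qw ih =>
    intro a b ha hb
    obtain ⟨hne, p, q, hp, hq, hpq⟩ := hadj
    obtain ⟨W1, hW1⟩ := exists_zero_walk (F := F) (ha.trans hp.symm)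
    obtain ⟨W2, hW2⟩ := ih q b hq hb
    refine ⟨W1.append (Walk.cons hpq W2), ?_⟩
    rw [cnt_append, hW1]
    simp only [Walk.length_cons, cnt_cons]
    refine le_trans ?_ (Nat.le_of_eq (Walk.length_cons _ _).symm)
    split <;> omega

end Aux4

namespace Aux5

attribute [local instance] Classical.propDecidable

open Aux Aux2 Aux3 Aux4

variable {V : Type*} {G : SimpleGraph V} {F : Set (Sym2 V)}

/-- KEY: the number of `F`-edges on any geodesic equals the quotient distance. -/
lemma cnt_geodesic_eq_qdist (hG : G.Connected) (hcl : ∀ e ∈ F, ∀ f, theta G e f → f ∈ F)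
    {x y : V} (P : G.Walk x y) (hlen : P.length = G.dist x y) :
    cnt F P = (quotientGraph G F).dist ((G.deleteEdges F).connectedComponentMk x)
      ((G.deleteEdges F).connectedComponentMk y) := by
  obtain ⟨qw, hqw⟩ := exists_quotient_walk (F := F) P
  have hle : (quotientGraph G F).dist ((G.deleteEdges F).connectedComponentMk x)
      ((G.deleteEdges F).connectedComponentMk y) ≤ cnt F P :=
    le_trans (SimpleGraph.dist_le qw) hqw
  have hreach : (quotientGraph G F).Reachable ((G.deleteEdges F).connectedComponentMk x)
      ((G.deleteEdges F).connectedComponentMk y) := ⟨qw⟩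
  obtain ⟨qw₀, hqw₀⟩ := hreach.exists_walk_length_eq_dist
  obtain ⟨W, hW⟩ := exists_lift_walk (F := F) qw₀ x y rfl rfl
  have h1 : phi F P y - phi F P x = 2 * cnt F P := phi_geodesic hG hcl P hlen
  have h2 : phi F P y - phi F P x ≤ 2 * cnt F W := phi_walk_le hG hcl P W
  omega

lemma lt_case (hG : G.Connected) (hFsub : F ⊆ G.edgeSet)
    (hcl : ∀ e ∈ F, ∀ f, theta G e f → f ∈ F)
    {u v z : V} (huv : s(u, v) ∈ F) (hlt : G.dist z u < G.dist z v) :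
    (quotientGraph G F).dist ((G.deleteEdges F).connectedComponentMk z)
      ((G.deleteEdges F).connectedComponentMk u) <
    (quotientGraph G F).dist ((G.deleteEdges F).connectedComponentMk z)
      ((G.deleteEdges F).connectedComponentMk v) := by
  have hadj : G.Adj u v := G.mem_edgeSet.mp (hFsub huv)
  have hduv : G.dist u v = 1 := SimpleGraph.dist_eq_one_iff_adj.mpr hadj
  have htri : G.dist z v ≤ G.dist z u + G.dist u v := hG.dist_triangle
  have hdzv : G.dist z v = G.dist z u + 1 := by omega
  obtain ⟨P, hP⟩ := (hG.preconnected z u).exists_walk_length_eq_dist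
  have hPu := cnt_geodesic_eq_qdist hG hcl P hP
  set W : G.Walk z v := P.append (Walk.cons hadj Walk.nil) with hWdef
  have hWlen : W.length = G.dist z v := by
    simp [hWdef, Walk.length_append, hP, hdzv]
  have hWcnt : cnt F W = cnt F P + 1 := by
    rw [hWdef, cnt_append]
    simp [cnt, huv]
  have hPv := cnt_geodesic_eq_qdist hG hcl W hWlen
  omega

lemma eq_case_le (hG : G.Connected) (hFsub : F ⊆ G.edgeSet)
    (hcl : ∀ e ∈ F, ∀ f, theta G e f → f ∈ F)
    {u v z : V} (huv : s(u, v) ∈ F) (heq : G.dist z u = G.dist z v) :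
    (quotientGraph G F).dist ((G.deleteEdges F).connectedComponentMk z)
      ((G.deleteEdges F).connectedComponentMk u) ≤
    (quotientGraph G F).dist ((G.deleteEdges F).connectedComponentMk z)
      ((G.deleteEdges F).connectedComponentMk v) := by
  have hadj : G.Adj u v := G.mem_edgeSet.mp (hFsub huv)
  obtain ⟨Pu, hPu⟩ := (hG.preconnected z u).exists_walk_length_eq_dist
  obtain ⟨Pv, hPv⟩ := (hG.preconnected z v).exists_walk_length_eq_dist
  have hqu := cnt_geodesic_eq_qdist hG hcl Pu hPu
  have hqv := cnt_geodesic_eq_qdist hG hcl Pv hPv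
  have h1 : phi F Pu u - phi F Pu z = 2 * cnt F Pu := phi_geodesic hG hcl Pu hPu
  have h2 : phi F Pu v - phi F Pu z ≤ 2 * cnt F Pv := phi_walk_le hG hcl Pu Pv
  have hvu : s(v, u) ∈ F := by rwa [Sym2.eq_swap]
  have h3 : phi F Pu u - phi F Pu v =
      ((G.dist u z : ℤ) - (G.dist u u : ℤ)) - ((G.dist v z : ℤ) - (G.dist v u : ℤ)) :=
    phi_jump hcl Pu hadj.symm hvu
  have e1 : G.dist u z = G.dist z u := G.dist_comm
  have e2 : G.dist v z = G.dist z v := G.dist_comm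
  have e3 : G.dist u u = 0 := by simp
  have e4 : G.dist v u = 1 := SimpleGraph.dist_eq_one_iff_adj.mpr hadj.symm
  omega

end Aux5

/-- if `{F₁, …, F_k}` is a c-partition of the edge set of a finite
connected graph `G` and `e = uv ∈ F_i`, then a vertex `z` belongs to
`N_u(e|G)` iff its component `ℓ_i(z)` belongs to `N_U(E|G_i)`, where
`U = ℓ_i(u)`, `V = ℓ_i(v)` and `E = UV`. -/
theorem mem_N_iff_component_mem_N {V : Type*} [Fintype V] (G : SimpleGraph V)
    (hG : G.Connected) {k : ℕ} (F : Fin k → Set (Sym2 V))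
    (hF : IsCPartition G F) (i : Fin k) (u v : V) (he : s(u, v) ∈ F i)
    (z : V) :
    G.dist z u < G.dist z v ↔
      (quotientGraph G (F i)).dist
          ((G.deleteEdges (F i)).connectedComponentMk z)
          ((G.deleteEdges (F i)).connectedComponentMk u) <
        (quotientGraph G (F i)).dist
          ((G.deleteEdges (F i)).connectedComponentMk z)
          ((G.deleteEdges (F i)).connectedComponentMk v) := by
  have hFsub : F i ⊆ G.edgeSet := hF.1.1 i
  have hcl : ∀ e ∈ F i, ∀ f, theta G e f → f ∈ F i := fun e heF f hef =>
    hF.2 e f (Relation.TransGen.single hef) i heF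
  have hvu : s(v, u) ∈ F i := by rwa [Sym2.eq_swap]
  rcases lt_trichotomy (G.dist z u) (G.dist z v) with hlt | heq | hgt
  · exact ⟨fun _ => Aux5.lt_case hG hFsub hcl he hlt, fun _ => hlt⟩
  · have h1 := Aux5.eq_case_le hG hFsub hcl he heq
    have h2 := Aux5.eq_case_le hG hFsub hcl hvu heq.symm
    constructor
    · intro h; omega
    · intro h; omega
  · have h1 := Aux5.lt_case hG hFsub hcl hvu hgt
    constructor
    · intro h; omega
    · intro h; omega
end
end

section
/- Let G be a finite connected graph with vertex weights w : V(G) → ℝ≥0, let {F_1, …, F_k} be a c-partition of E(G), and let e = uv ∈ F_i. Set U = ℓ_i(u), V = ℓ_i(v), so that E = UV is an edge of G_i = G/F_i, and define λ_i : V(G_i) → ℝ≥0 by λ_i(X) = Σ_{x ∈ V(X)} w(x). Then n_u(e|(G,w)) = n_U(E|(G_i,λ_i)) and n_v(e|(G,w)) = n_V(E|(G_i,λ_i)). -/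
open SimpleGraph

noncomputable section

section CutMethodProof

open Relation
open scoped Classical

variable {V : Type*}

namespace CutMethodAux

/-- Number of `F`-edges of a walk. -/
noncomputable def cnt {G : SimpleGraph V} (F : Set (Sym2 V)) :
    {a b : V} → G.Walk a b → ℕ
  | _, _, SimpleGraph.Walk.nil => 0
  | _, _, @SimpleGraph.Walk.cons _ _ a b _ _ p =>
      (if s(a, b) ∈ F then 1 else 0) + cnt F p

@[simp] lemma cnt_nil {G : SimpleGraph V} {F : Set (Sym2 V)} {a : V} :
    cnt F (SimpleGraph.Walk.nil : G.Walk a a) = 0 := rfl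

@[simp] lemma cnt_cons {G : SimpleGraph V} {F : Set (Sym2 V)} {a b c : V}
    (h : G.Adj a b) (p : G.Walk b c) :
    cnt F (SimpleGraph.Walk.cons h p) = (if s(a, b) ∈ F then 1 else 0) + cnt F p := rfl

lemma cnt_append {G : SimpleGraph V} {F : Set (Sym2 V)} {a b c : V}
    (p : G.Walk a b) (q : G.Walk b c) :
    cnt F (p.append q) = cnt F p + cnt F q := by
  induction p with
  | nil => simp
  | cons h p ih =>
    simp only [SimpleGraph.Walk.cons_append, cnt_cons, ih]
    ring

/-- The telescoping potential: sum over `F`-darts `(c, d)` of the walk of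
`dist w c - dist w d`. -/
noncomputable def phi {G : SimpleGraph V} (F : Set (Sym2 V)) :
    {x y : V} → G.Walk x y → V → ℤ
  | _, _, SimpleGraph.Walk.nil, _ => 0
  | _, _, @SimpleGraph.Walk.cons _ _ a b _ _ p, w =>
      (if s(a, b) ∈ F then ((G.dist w a : ℤ) - (G.dist w b : ℤ)) else 0) + phi F p w

@[simp] lemma phi_nil {G : SimpleGraph V} {F : Set (Sym2 V)} {a w : V} :
    phi F (SimpleGraph.Walk.nil : G.Walk a a) w = 0 := rfl

@[simp] lemma phi_cons {G : SimpleGraph V} {F : Set (Sym2 V)} {a b c : V}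
    (h : G.Adj a b) (p : G.Walk b c) (w : V) :
    phi F (SimpleGraph.Walk.cons h p) w =
      (if s(a, b) ∈ F then ((G.dist w a : ℤ) - (G.dist w b : ℤ)) else 0) + phi F p w := rfl

variable {G : SimpleGraph V} {F : Set (Sym2 V)}

lemma dist_adj {a b : V} (h : G.Adj a b) : G.dist a b = 1 :=
  SimpleGraph.dist_eq_one_iff_adj.2 h

lemma dist_lipschitz (hG : G.Connected) {a b : V} (h : G.Adj a b) (w : V) :
    (G.dist w a : ℤ) - (G.dist w b : ℤ) ≤ 1 ∧
      (G.dist w b : ℤ) - (G.dist w a : ℤ) ≤ 1 := by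
  have h1 : G.dist w a ≤ G.dist w b + G.dist b a := hG.dist_triangle
  have h2 : G.dist w b ≤ G.dist w a + G.dist a b := hG.dist_triangle
  have h3 : G.dist a b = 1 := dist_adj h
  have h4 : G.dist b a = 1 := dist_adj h.symm
  omega

/-- Flip lemma: if `s(a,b) ∈ F` and the edge `(p,q)` flips the sign function of
`(a,b)`, then `s(p,q) ∈ F`. -/
lemma mem_of_flip (hFc : ∀ e f, Relation.TransGen (theta G) e f → e ∈ F → f ∈ F)
    {a b p q : V} (hab : G.Adj a b) (hpq : G.Adj p q) (habF : s(a, b) ∈ F)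
    (hne : (G.dist p a : ℤ) - G.dist p b ≠ (G.dist q a : ℤ) - G.dist q b) :
    s(p, q) ∈ F := by
  apply hFc s(a, b) s(p, q) _ habF
  apply Relation.TransGen.single
  refine ⟨(G.mem_edgeSet).2 hab, (G.mem_edgeSet).2 hpq, a, b, p, q, rfl, rfl, ?_⟩
  intro hcontra
  apply hne
  have h1 : G.dist a p = G.dist p a := SimpleGraph.dist_comm
  have h2 : G.dist b q = G.dist q b := SimpleGraph.dist_comm
  have h3 : G.dist a q = G.dist q a := SimpleGraph.dist_comm
  have h4 : G.dist b p = G.dist p b := SimpleGraph.dist_comm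
  rw [h1, h2, h3, h4] at hcontra
  omega

/-- If `s(p,q) ∉ F` then crossing the edge `(p,q)` does not change `phi`. -/
lemma phi_flip_not_mem (hFc : ∀ e f, Relation.TransGen (theta G) e f → e ∈ F → f ∈ F)
    {p q : V} (hpq : G.Adj p q) (hnF : s(p, q) ∉ F) {x y : V} (P : G.Walk x y) :
    phi F P q = phi F P p := by
  induction P with
  | nil => simp
  | cons h P ih =>
    rename_i a b c
    simp only [phi_cons]
    rw [ih]
    congr 1
    by_cases hab : s(a, b) ∈ F
    · simp only [hab, if_true]
      by_contra hne
      exact hnF (mem_of_flip hFc h hpq hab (by omega))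
    · simp [hab]

/-- If `s(p,q) ∈ F` then crossing the edge `(p,q)` changes `phi` by an exact
telescoping quantity. -/
lemma phi_flip_mem (hFc : ∀ e f, Relation.TransGen (theta G) e f → e ∈ F → f ∈ F)
    {p q : V} (hpq : G.Adj p q) (hF2 : s(p, q) ∈ F) {x y : V} (P : G.Walk x y) :
    phi F P q - phi F P p =
      (((G.dist q x : ℤ) - G.dist p x) - ((G.dist q y : ℤ) - G.dist p y)) := by
  induction P with
  | nil => simp
  | cons h P ih =>
    rename_i a b c
    simp only [phi_cons]
    have key : (if s(a, b) ∈ F then ((G.dist q a : ℤ) - G.dist q b) else 0) -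
        (if s(a, b) ∈ F then ((G.dist p a : ℤ) - G.dist p b) else 0) =
        ((G.dist q a : ℤ) - G.dist p a) - ((G.dist q b : ℤ) - G.dist p b) := by
      by_cases hab : s(a, b) ∈ F
      · simp only [hab, if_true]; ring
      · simp only [hab, if_false]
        have heq : (G.dist a p : ℤ) - G.dist a q = (G.dist b p : ℤ) - G.dist b q := by
          by_contra hne
          exact hab (mem_of_flip hFc hpq h hF2 hne)
        have c1 : G.dist a p = G.dist p a := SimpleGraph.dist_comm
        have c2 : G.dist a q = G.dist q a := SimpleGraph.dist_comm
        have c3 : G.dist b p = G.dist p b := SimpleGraph.dist_comm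
        have c4 : G.dist b q = G.dist q b := SimpleGraph.dist_comm
        rw [c1, c2, c3, c4] at heq
        omega
    omega

/-- Per-edge bound for the potential. -/
lemma phi_step (hG : G.Connected)
    (hFc : ∀ e f, Relation.TransGen (theta G) e f → e ∈ F → f ∈ F)
    {p q : V} (hpq : G.Adj p q) {x y : V} (P : G.Walk x y) :
    phi F P q - phi F P p ≤ 2 * (if s(p, q) ∈ F then 1 else 0) := by
  by_cases hF2 : s(p, q) ∈ F
  · rw [phi_flip_mem hFc hpq hF2 P]
    have l1 := dist_lipschitz hG hpq x
    have l2 := dist_lipschitz hG hpq y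
    have c1 : G.dist x p = G.dist p x := SimpleGraph.dist_comm
    have c2 : G.dist x q = G.dist q x := SimpleGraph.dist_comm
    have c3 : G.dist y p = G.dist p y := SimpleGraph.dist_comm
    have c4 : G.dist y q = G.dist q y := SimpleGraph.dist_comm
    simp only [hF2, if_true]
    rw [c1, c2] at l1
    rw [c3, c4] at l2
    omega
  · rw [phi_flip_not_mem hFc hpq hF2 P]
    simp [hF2]

/-- Walk telescoping: for any walk `W : a → b`,
`phi P b - phi P a ≤ 2 * cnt W`. -/
lemma phi_walk (hG : G.Connected)
    (hFc : ∀ e f, Relation.TransGen (theta G) e f → e ∈ F → f ∈ F)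
    {x y : V} (P : G.Walk x y) :
    ∀ {a b : V} (W : G.Walk a b), phi F P b - phi F P a ≤ 2 * (cnt F W : ℤ) := by
  intro a b W
  induction W with
  | nil => simp
  | cons h W ih =>
    rename_i a' b' c'
    have step := phi_step hG hFc h P
    rw [cnt_cons]
    by_cases hab : s(a', b') ∈ F
    · simp only [hab, if_true] at step ⊢
      push_cast
      omega
    · simp only [hab, if_false] at step ⊢
      push_cast
      omega

/-- Endpoint values of the potential along its own shortest walk. -/
lemma phi_endpoints_aux (hG : G.Connected) (z : V) :
    ∀ {a y : V} (P : G.Walk a y), G.dist z a + P.length = G.dist z y →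
      P.length = G.dist a y →
      phi F P y - phi F P z = 2 * (cnt F P : ℤ) := by
  intro a y P
  induction P with
  | nil => intro _ _; simp
  | cons h P ih =>
    rename_i a b c
    intro h1 h2
    have hdistle : G.dist b c ≤ P.length := SimpleGraph.dist_le P
    have htr1 : G.dist a c ≤ G.dist a b + G.dist b c := hG.dist_triangle
    have hab1 : G.dist a b = 1 := dist_adj h
    have hlencons : (SimpleGraph.Walk.cons h P).length = P.length + 1 := by
      simp [SimpleGraph.Walk.length_cons]
    have hlen : P.length = G.dist b c := by omega
    have hzble : G.dist z b ≤ G.dist z a + G.dist a b := hG.dist_triangle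
    have htr2 : G.dist z c ≤ G.dist z b + G.dist b c := hG.dist_triangle
    have hzb : G.dist z b = G.dist z a + 1 := by omega
    have hby : G.dist a c = G.dist b c + 1 := by omega
    have IH := ih (by omega) hlen
    simp only [phi_cons, cnt_cons]
    have c1 : G.dist c a = G.dist a c := SimpleGraph.dist_comm
    have c2 : G.dist c b = G.dist b c := SimpleGraph.dist_comm
    by_cases hab : s(a, b) ∈ F
    · simp only [hab, if_true]
      push_cast
      omega
    · simp only [hab, if_false]
      push_cast
      omega

lemma phi_endpoints (hG : G.Connected) {z y : V} (P : G.Walk z y)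
    (hP : P.length = G.dist z y) :
    phi F P y - phi F P z = 2 * (cnt F P : ℤ) :=
  phi_endpoints_aux hG z P (by simp [hP]) hP

/-- Projection: a walk in `G` induces a walk in the quotient of length at most
the number of `F`-edges. -/
lemma project_walk : ∀ {a b : V} (W : G.Walk a b),
    ∃ R : (quotientGraph G F).Walk ((G.deleteEdges F).connectedComponentMk a)
      ((G.deleteEdges F).connectedComponentMk b), R.length ≤ cnt F W := by
  intro a b W
  induction W with
  | nil => exact ⟨SimpleGraph.Walk.nil, by simp⟩
  | cons h W ih =>
    rename_i a' b' c'
    obtain ⟨R, hR⟩ := ih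
    by_cases hmk : (G.deleteEdges F).connectedComponentMk a' =
        (G.deleteEdges F).connectedComponentMk b'
    · refine ⟨R.copy hmk.symm rfl, ?_⟩
      rw [SimpleGraph.Walk.length_copy, cnt_cons]
      omega
    · have hmem : s(a', b') ∈ F := by
        by_contra hnF
        exact hmk (SimpleGraph.ConnectedComponent.sound
          (SimpleGraph.Adj.reachable (by
            rw [SimpleGraph.deleteEdges_adj]
            exact ⟨h, hnF⟩)))
      refine ⟨SimpleGraph.Walk.cons (show (quotientGraph G F).Adj _ _ from ⟨hmk, a', b', rfl, rfl, h⟩) R, ?_⟩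
      rw [cnt_cons, SimpleGraph.Walk.length_cons]
      simp only [hmem, if_true]
      omega

lemma cnt_transfer_zero : ∀ {a b : V} (W0 : (G.deleteEdges F).Walk a b)
    (hE : ∀ e ∈ W0.edges, e ∈ G.edgeSet), cnt F (W0.transfer G hE) = 0 := by
  intro a b W0
  induction W0 with
  | nil => intro hE; rfl
  | cons h W ih =>
    intro hE
    simp only [SimpleGraph.Walk.transfer, cnt_cons]
    have hnF := (SimpleGraph.deleteEdges_adj.mp h).2
    change (if s(_, _) ∈ F then 1 else 0) + cnt F (W.transfer G _) = 0
    simp only [hnF, if_false]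
    simp [ih]

lemma lift_walk : ∀ {X Y : (G.deleteEdges F).ConnectedComponent}
    (R : (quotientGraph G F).Walk X Y) (a b : V),
    (G.deleteEdges F).connectedComponentMk a = X →
    (G.deleteEdges F).connectedComponentMk b = Y →
    ∃ W : G.Walk a b, cnt F W ≤ R.length := by
  intro X Y R
  induction R with
  | nil =>
    intro a b ha hb
    have hreach : (G.deleteEdges F).Reachable a b := by
      apply SimpleGraph.ConnectedComponent.exact
      rw [ha, hb]
    obtain ⟨W0⟩ := hreach
    have hEdges : ∀ e ∈ W0.edges, e ∈ G.edgeSet := fun e he =>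
      SimpleGraph.edgeSet_mono (SimpleGraph.deleteEdges_le _) (W0.edges_subset_edgeSet he)
    exact ⟨W0.transfer G hEdges, by rw [cnt_transfer_zero]; simp⟩
  | cons h R ih =>
    intro a b ha hb
    obtain ⟨hne, x', y', hx', hy', hadj⟩ := h
    obtain ⟨W2, hW2⟩ := ih y' b hy' hb
    have hreach : (G.deleteEdges F).Reachable a x' := by
      apply SimpleGraph.ConnectedComponent.exact
      rw [ha, hx']
    obtain ⟨W0⟩ := hreach
    have hEdges : ∀ e ∈ W0.edges, e ∈ G.edgeSet := fun e he =>
      SimpleGraph.edgeSet_mono (SimpleGraph.deleteEdges_le _) (W0.edges_subset_edgeSet he)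
    refine ⟨(W0.transfer G hEdges).append (SimpleGraph.Walk.cons hadj W2), ?_⟩
    rw [cnt_append, cnt_cons, cnt_transfer_zero]
    change _ ≤ R.length + 1
    by_cases hxy : s(x', y') ∈ F <;> simp [hxy] <;> omega

/-- Shortest walks in `G` realize the quotient distance by their `F`-edge count. -/
lemma quotient_dist_eq (hG : G.Connected)
    (hFc : ∀ e f, Relation.TransGen (theta G) e f → e ∈ F → f ∈ F)
    {z y : V} (P : G.Walk z y) (hP : P.length = G.dist z y) :
    (quotientGraph G F).dist ((G.deleteEdges F).connectedComponentMk z)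
      ((G.deleteEdges F).connectedComponentMk y) = cnt F P := by
  obtain ⟨R, hR⟩ := project_walk (F := F) P
  have hle : (quotientGraph G F).dist _ _ ≤ cnt F P :=
    le_trans (SimpleGraph.dist_le R) hR
  have hreach : (quotientGraph G F).Reachable
      ((G.deleteEdges F).connectedComponentMk z)
      ((G.deleteEdges F).connectedComponentMk y) := ⟨R⟩
  obtain ⟨R0, hR0⟩ := hreach.exists_walk_length_eq_dist
  obtain ⟨W, hW⟩ := lift_walk R0 z y rfl rfl
  have h1 : phi F P y - phi F P z = 2 * (cnt F P : ℤ) := phi_endpoints hG P hP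
  have h2 : phi F P y - phi F P z ≤ 2 * (cnt F W : ℤ) := phi_walk hG hFc P W
  omega

/-- Half of the main comparison: if `dist z u ≤ dist z v` then the quotient
distances compare likewise. -/
lemma main_half (hG : G.Connected)
    (hFc : ∀ e f, Relation.TransGen (theta G) e f → e ∈ F → f ∈ F)
    {u v : V} (huv : G.Adj u v) (he : s(u, v) ∈ F) (z : V)
    (h0 : G.dist z u ≤ G.dist z v) :
    (quotientGraph G F).dist ((G.deleteEdges F).connectedComponentMk z)
        ((G.deleteEdges F).connectedComponentMk u) ≤
      (quotientGraph G F).dist ((G.deleteEdges F).connectedComponentMk z)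
        ((G.deleteEdges F).connectedComponentMk v) := by
  obtain ⟨P, hP⟩ := hG.exists_walk_length_eq_dist z u
  rw [quotient_dist_eq hG hFc P hP]
  obtain ⟨Wzv⟩ := hG.preconnected z v
  obtain ⟨R1, _⟩ := project_walk (F := F) Wzv
  have hreach : (quotientGraph G F).Reachable
      ((G.deleteEdges F).connectedComponentMk z)
      ((G.deleteEdges F).connectedComponentMk v) := ⟨R1⟩
  obtain ⟨R0, hR0⟩ := hreach.exists_walk_length_eq_dist
  obtain ⟨W, hW⟩ := lift_walk R0 z v rfl rfl
  have h2 : phi F P v - phi F P z ≤ 2 * (cnt F W : ℤ) := phi_walk hG hFc P W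
  have h1 : phi F P u - phi F P z = 2 * (cnt F P : ℤ) := phi_endpoints hG P hP
  have hevu : s(v, u) ∈ F := by rw [Sym2.eq_swap]; exact he
  have h3 : phi F P u - phi F P v =
      (((G.dist u z : ℤ) - G.dist v z) - ((G.dist u u : ℤ) - G.dist v u)) :=
    phi_flip_mem hFc huv.symm hevu P
  have h4 : G.dist u u = 0 := SimpleGraph.dist_self
  have h5 : G.dist v u = 1 := dist_adj huv.symm
  have c1 : G.dist u z = G.dist z u := SimpleGraph.dist_comm
  have c2 : G.dist v z = G.dist z v := SimpleGraph.dist_comm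
  omega

/-- Strict half: if `dist z u < dist z v` then quotient distances strictly
compare. -/
lemma main_strict (hG : G.Connected)
    (hFc : ∀ e f, Relation.TransGen (theta G) e f → e ∈ F → f ∈ F)
    {u v : V} (huv : G.Adj u v) (he : s(u, v) ∈ F) (z : V)
    (hlt : G.dist z u < G.dist z v) :
    (quotientGraph G F).dist ((G.deleteEdges F).connectedComponentMk z)
        ((G.deleteEdges F).connectedComponentMk u) <
      (quotientGraph G F).dist ((G.deleteEdges F).connectedComponentMk z)
        ((G.deleteEdges F).connectedComponentMk v) := by
  have htr : G.dist z v ≤ G.dist z u + G.dist u v := hG.dist_triangle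
  have huv1 : G.dist u v = 1 := dist_adj huv
  have heq : G.dist z v = G.dist z u + 1 := by omega
  obtain ⟨P, hP⟩ := hG.exists_walk_length_eq_dist z u
  have hP' : (P.concat huv).length = G.dist z v := by
    rw [SimpleGraph.Walk.length_concat, hP, heq]
  rw [quotient_dist_eq hG hFc P hP, quotient_dist_eq hG hFc (P.concat huv) hP']
  rw [SimpleGraph.Walk.concat_eq_append, cnt_append, cnt_cons, cnt_nil]
  simp only [he, if_true]
  omega

/-- The main pointwise equivalence. -/
lemma main_iff (hG : G.Connected)
    (hFc : ∀ e f, Relation.TransGen (theta G) e f → e ∈ F → f ∈ F)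
    {u v : V} (huv : G.Adj u v) (he : s(u, v) ∈ F) (z : V) :
    (G.dist z u < G.dist z v) ↔
      ((quotientGraph G F).dist ((G.deleteEdges F).connectedComponentMk z)
          ((G.deleteEdges F).connectedComponentMk u) <
        (quotientGraph G F).dist ((G.deleteEdges F).connectedComponentMk z)
          ((G.deleteEdges F).connectedComponentMk v)) := by
  constructor
  · exact main_strict hG hFc huv he z
  · intro hq
    by_contra hnot
    have h0 : G.dist z v ≤ G.dist z u := by omega
    have hevu : s(v, u) ∈ F := by rw [Sym2.eq_swap]; exact he
    have := main_half hG hFc huv.symm hevu z h0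
    omega

/-- The weighted summation identity, for one orientation. -/
lemma nw_core [Fintype V] {G : SimpleGraph V} {F : Set (Sym2 V)} (hG : G.Connected)
    (hFc : ∀ e f, Relation.TransGen (theta G) e f → e ∈ F → f ∈ F)
    (w : V → NNReal) {u v : V} (huv : G.Adj u v) (he : s(u, v) ∈ F) :
    nW G w u v = nW (quotientGraph G F)
        (fun X => ∑ᶠ x ∈ {x : V | (G.deleteEdges F).connectedComponentMk x = X}, w x)
        ((G.deleteEdges F).connectedComponentMk u)
        ((G.deleteEdges F).connectedComponentMk v) := by
  classical
  letI : Fintype (G.deleteEdges F).ConnectedComponent := Fintype.ofFinite _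
  have hpt := main_iff hG hFc huv he
  unfold nW
  have hL : {x : V | G.dist x u < G.dist x v} =
      ↑(Finset.univ.filter fun x => G.dist x u < G.dist x v) := by
    ext x; simp
  have hR : {X : (G.deleteEdges F).ConnectedComponent |
      (quotientGraph G F).dist X ((G.deleteEdges F).connectedComponentMk u) <
      (quotientGraph G F).dist X ((G.deleteEdges F).connectedComponentMk v)} =
      ↑(Finset.univ.filter fun X =>
        (quotientGraph G F).dist X ((G.deleteEdges F).connectedComponentMk u) <
        (quotientGraph G F).dist X ((G.deleteEdges F).connectedComponentMk v)) := by
    ext X; simp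
  rw [hL, hR, finsum_mem_coe_finset, finsum_mem_coe_finset]
  have hfib : ∀ X : (G.deleteEdges F).ConnectedComponent,
      (∑ᶠ x ∈ {x : V | (G.deleteEdges F).connectedComponentMk x = X}, w x) =
      ∑ x ∈ Finset.univ.filter (fun x => (G.deleteEdges F).connectedComponentMk x = X),
        w x := by
    intro X
    rw [show {x : V | (G.deleteEdges F).connectedComponentMk x = X} =
      ↑(Finset.univ.filter fun x => (G.deleteEdges F).connectedComponentMk x = X) by
        ext x; simp, finsum_mem_coe_finset]
  calc ∑ x ∈ Finset.univ.filter (fun x => G.dist x u < G.dist x v), w x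
      = ∑ x ∈ Finset.univ.filter (fun x =>
          (quotientGraph G F).dist ((G.deleteEdges F).connectedComponentMk x)
              ((G.deleteEdges F).connectedComponentMk u) <
            (quotientGraph G F).dist ((G.deleteEdges F).connectedComponentMk x)
              ((G.deleteEdges F).connectedComponentMk v)), w x := by
        refine Finset.sum_congr (Finset.filter_congr ?_) (fun _ _ => rfl)
        intro x _
        exact hpt x
    _ = ∑ x ∈ Finset.univ, (if
          (quotientGraph G F).dist ((G.deleteEdges F).connectedComponentMk x)
              ((G.deleteEdges F).connectedComponentMk u) <
            (quotientGraph G F).dist ((G.deleteEdges F).connectedComponentMk x)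
              ((G.deleteEdges F).connectedComponentMk v) then w x else 0) := by
        rw [Finset.sum_filter]
    _ = ∑ x ∈ Finset.univ, ∑ X ∈ Finset.univ.filter (fun X =>
          (quotientGraph G F).dist X ((G.deleteEdges F).connectedComponentMk u) <
            (quotientGraph G F).dist X ((G.deleteEdges F).connectedComponentMk v)),
          (if (G.deleteEdges F).connectedComponentMk x = X then w x else 0) := by
        refine Finset.sum_congr rfl (fun x _ => ?_)
        rw [Finset.sum_ite_eq]
        simp
    _ = ∑ X ∈ Finset.univ.filter (fun X =>
          (quotientGraph G F).dist X ((G.deleteEdges F).connectedComponentMk u) <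
            (quotientGraph G F).dist X ((G.deleteEdges F).connectedComponentMk v)),
        ∑ x ∈ Finset.univ,
          (if (G.deleteEdges F).connectedComponentMk x = X then w x else 0) :=
        Finset.sum_comm
    _ = ∑ X ∈ Finset.univ.filter (fun X =>
          (quotientGraph G F).dist X ((G.deleteEdges F).connectedComponentMk u) <
            (quotientGraph G F).dist X ((G.deleteEdges F).connectedComponentMk v)),
        ∑ᶠ x ∈ {x : V | (G.deleteEdges F).connectedComponentMk x = X}, w x := by
        refine Finset.sum_congr rfl (fun X _ => ?_)
        rw [hfib X, Finset.sum_filter]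

end CutMethodAux

end CutMethodProof


/-- if `{F₁, …, F_k}` is a c-partition of the edge set of a finite
connected graph `G` with vertex weights `w` and `e = uv ∈ F_i`, then
`n_u(e|(G,w)) = n_U(E|(G_i,λ_i))` and `n_v(e|(G,w)) = n_V(E|(G_i,λ_i))`,
where `λ_i(X)` is the total weight of the component `X`. -/
theorem nW_eq_quotient_nW {V : Type*} [Fintype V] (G : SimpleGraph V)
    (hG : G.Connected) (w : V → NNReal) {k : ℕ} (F : Fin k → Set (Sym2 V))
    (hF : IsCPartition G F) (i : Fin k) (u v : V) (he : s(u, v) ∈ F i) :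
    nW G w u v = nW (quotientGraph G (F i))
        (fun X => ∑ᶠ x ∈ {x : V |
            (G.deleteEdges (F i)).connectedComponentMk x = X}, w x)
        ((G.deleteEdges (F i)).connectedComponentMk u)
        ((G.deleteEdges (F i)).connectedComponentMk v) ∧
      nW G w v u = nW (quotientGraph G (F i))
        (fun X => ∑ᶠ x ∈ {x : V |
            (G.deleteEdges (F i)).connectedComponentMk x = X}, w x)
        ((G.deleteEdges (F i)).connectedComponentMk v)
        ((G.deleteEdges (F i)).connectedComponentMk u) := by
  classical
  obtain ⟨⟨hsub, _hcov, _hdisj⟩, hclose⟩ := hF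
  have hF1 : F i ⊆ G.edgeSet := hsub i
  have hFc : ∀ e f, Relation.TransGen (theta G) e f → e ∈ F i → f ∈ F i :=
    fun e f ht he' => hclose e f ht i he'
  have huv : G.Adj u v := (G.mem_edgeSet).1 (hF1 he)
  have hevu : s(v, u) ∈ F i := by rw [Sym2.eq_swap]; exact he
  exact ⟨CutMethodAux.nw_core hG hFc w huv he,
    CutMethodAux.nw_core hG hFc w huv.symm hevu⟩
end
end

section
/- Let G be a finite connected graph and let {F_1, …, F_k} be a c-partition of E(G). For each i define λ_i : V(G_i) → ℝ≥0 by λ_i(X) = |V(X)| (the number of vertices in the component X of G − F_i) and λ_i' : E(G_i) → ℝ≥0 by λ_i'(XY) = |{xy ∈ E(G) : x ∈ V(X), y ∈ V(Y)}| (the number of edges of G between X and Y), where G_i = G/F_i. Then the (unweighted) Mostar index satisfies Mo(G) = Σ_{i=1}^{k} Mo(G_i, λ_i, λ_i'). -/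
open SimpleGraph

noncomputable section

namespace MostarProof

variable {V : Type*} (G : SimpleGraph V)

/-- `g_{u,v}(x) = d(x,u) - d(x,v)` as an integer. -/
def gI (u v x : V) : ℤ := (G.dist x u : ℤ) - (G.dist x v : ℤ)

open Classical in
/-- The darts of a walk whose edge lies in `F`. -/
def Fdarts (F : Set (Sym2 V)) {x y : V} (W : G.Walk x y) : List G.Dart :=
  W.darts.filter (fun d => decide (d.edge ∈ F))

open Classical in
/-- The number of edges of a walk (with multiplicity) lying in `F`. -/
def cF (F : Set (Sym2 V)) {x y : V} (W : G.Walk x y) : ℕ := (Fdarts G F W).length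

variable {G}

lemma mem_Fdarts {F : Set (Sym2 V)} {x y : V} {W : G.Walk x y} {d : G.Dart} :
    d ∈ Fdarts G F W ↔ d ∈ W.darts ∧ d.edge ∈ F := by
  simp [Fdarts, List.mem_filter]

section Conn

variable (hG : G.Connected)
include hG

omit hG in
lemma dist_adj {u v : V} (h : G.Adj u v) : G.dist u v = 1 :=
  SimpleGraph.dist_eq_one_iff_adj.2 h

lemma gI_le_one {u v : V} (h : G.Adj u v) (x : V) : gI G u v x ≤ 1 := by
  have h1 : G.dist x u ≤ G.dist x v + G.dist v u := hG.dist_triangle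
  have h2 : G.dist v u = 1 := dist_adj h.symm
  simp only [gI]
  omega

lemma neg_one_le_gI {u v : V} (h : G.Adj u v) (x : V) : -1 ≤ gI G u v x := by
  have h1 : G.dist x v ≤ G.dist x u + G.dist u v := hG.dist_triangle
  have h2 : G.dist u v = 1 := dist_adj h
  simp only [gI]
  omega

end Conn

/-- σ-symmetry: the change of `g_{u,v}` across the dart `(a,b)` equals the change of
`g_{a,b}` across the dart `(u,v)`. -/
lemma sig_symm (u v a b : V) :
    gI G u v b - gI G u v a = gI G a b v - gI G a b u := by
  simp only [gI]
  rw [show G.dist b u = G.dist u b from G.dist_comm, show G.dist b v = G.dist v b from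
    G.dist_comm, show G.dist a u = G.dist u a from G.dist_comm,
    show G.dist a v = G.dist v a from G.dist_comm]
  ring

lemma theta_of_gI_ne {u v a b : V} (hd : G.Adj u v) (hf : G.Adj a b)
    (h : gI G u v b - gI G u v a ≠ 0) : theta G s(u, v) s(a, b) := by
  refine ⟨G.mem_edgeSet.2 hd, G.mem_edgeSet.2 hf, u, v, a, b, rfl, rfl, ?_⟩
  intro hEq
  apply h
  have h1 : G.dist a u = G.dist u a := G.dist_comm ..
  have h2 : G.dist b v = G.dist v b := G.dist_comm ..
  have h3 : G.dist a v = G.dist v a := G.dist_comm ..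
  have h4 : G.dist b u = G.dist u b := G.dist_comm ..
  simp only [gI]
  omega

section ThetaClosed

variable {F : Set (Sym2 V)}
  (hFcl : ∀ e f, theta G e f → e ∈ F → f ∈ F)

include hFcl

/-- Telescoping along a walk, restricted to `F`-darts: for an `F`-edge `s(u,v)` the
function `g_{u,v}` only changes across `F`-darts. -/
lemma telescope_F {u v : V} (huv : G.Adj u v) (he : s(u, v) ∈ F) {x y : V} (W : G.Walk x y) :
    ((Fdarts G F W).map (fun d => gI G u v d.snd - gI G u v d.fst)).sum
      = gI G u v y - gI G u v x := by
  induction W with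
  | nil => simp [Fdarts]
  | @cons a c y h p ih =>
      have hedge : (SimpleGraph.Dart.mk (a, c) h).edge = s(a, c) := rfl
      by_cases hc : s(a, c) ∈ F
      · have : Fdarts G F (SimpleGraph.Walk.cons h p)
            = SimpleGraph.Dart.mk (a, c) h :: Fdarts G F p := by
          simp [Fdarts, SimpleGraph.Walk.darts_cons, List.filter_cons, hedge, hc]
        rw [this]
        simp only [List.map_cons, List.sum_cons, ih]
        ring
      · have hzero : gI G u v c - gI G u v a = 0 := by
          by_contra hne
          exact hc (hFcl _ _ (theta_of_gI_ne huv h hne) he)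
        have : Fdarts G F (SimpleGraph.Walk.cons h p) = Fdarts G F p := by
          simp [Fdarts, SimpleGraph.Walk.darts_cons, List.filter_cons, hedge, hc]
        rw [this, ih]
        omega

end ThetaClosed


section Geodesic

variable (hG : G.Connected)
include hG

/-- Step facts for a geodesic starting with a cons. -/
lemma geodesic_cons_facts {x c y : V} (h : G.Adj x c) (p : G.Walk c y)
    (hP : (SimpleGraph.Walk.cons h p).length = G.dist x y) :
    p.length = G.dist c y ∧ G.dist x y = G.dist c y + 1 ∧ G.dist x c = 1 := by
  have h1 : G.dist c y ≤ p.length := SimpleGraph.dist_le p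
  have hxc : G.dist x c = 1 := dist_adj h
  have h2 : G.dist x y ≤ G.dist x c + G.dist c y := hG.dist_triangle
  have h3 : (SimpleGraph.Walk.cons h p).length = p.length + 1 := by
    simp [SimpleGraph.Walk.length_cons]
  omega

lemma geodesic_support {x y : V} (P : G.Walk x y) (hP : P.length = G.dist x y) :
    ∀ v ∈ P.support, G.dist x v + G.dist v y = G.dist x y := by
  induction P with
  | nil =>
      intro v hv
      simp only [SimpleGraph.Walk.support_nil, List.mem_singleton] at hv
      subst hv
      simp only [SimpleGraph.Walk.length_nil] at hP
      omega
  | @cons x c y h p ih =>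
      obtain ⟨hp, hxy, hxc⟩ := geodesic_cons_facts hG h p hP
      intro v hv
      rw [SimpleGraph.Walk.support_cons, List.mem_cons] at hv
      rcases hv with rfl | hv
      · simp
      · have hcv := ih hp v hv
        have t1 : G.dist x v ≤ G.dist x c + G.dist c v := hG.dist_triangle
        have t2 : G.dist x y ≤ G.dist x v + G.dist v y := hG.dist_triangle
        omega

lemma geodesic_dart_y {x y : V} (P : G.Walk x y) (hP : P.length = G.dist x y) :
    ∀ d ∈ P.darts, G.dist d.snd y + 1 = G.dist d.fst y := by
  induction P with
  | nil => intro d hd; simp [SimpleGraph.Walk.darts_nil] at hd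
  | @cons x c y h p ih =>
      obtain ⟨hp, hxy, hxc⟩ := geodesic_cons_facts hG h p hP
      intro d hd
      rw [SimpleGraph.Walk.darts_cons, List.mem_cons] at hd
      rcases hd with rfl | hd
      · have hxyy : G.dist x y = G.dist c y + 1 := hxy
        simpa using hxyy.symm
      · exact ih hp d hd

lemma geodesic_dart_vals {x y : V} (P : G.Walk x y) (hP : P.length = G.dist x y)
    {d : G.Dart} (hd : d ∈ P.darts) :
    gI G d.fst d.snd x = -1 ∧ gI G d.fst d.snd y = 1 := by
  have hy := geodesic_dart_y hG P hP d hd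
  have hfs : G.dist x d.fst + G.dist d.fst y = G.dist x y :=
    geodesic_support hG P hP _ (SimpleGraph.Walk.dart_fst_mem_support_of_mem_darts P hd)
  have hss : G.dist x d.snd + G.dist d.snd y = G.dist x y :=
    geodesic_support hG P hP _ (SimpleGraph.Walk.dart_snd_mem_support_of_mem_darts P hd)
  have hx1 : G.dist x d.fst + 1 = G.dist x d.snd := by omega
  constructor
  · simp only [gI]
    omega
  · simp only [gI]
    rw [show G.dist y d.fst = G.dist d.fst y from G.dist_comm,
      show G.dist y d.snd = G.dist d.snd y from G.dist_comm]
    omega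

end Geodesic

section ListLemmas

lemma list_sum_map_add {α : Type*} (l : List α) (f g : α → ℤ) :
    (l.map (fun a => f a + g a)).sum = (l.map f).sum + (l.map g).sum := by
  induction l with
  | nil => simp
  | cons a l ih => simp only [List.map_cons, List.sum_cons, ih]; ring

lemma list_sum_swap {α β : Type*} (l1 : List α) (l2 : List β) (h : α → β → ℤ) :
    (l1.map (fun a => (l2.map (h a)).sum)).sum
      = (l2.map (fun b => (l1.map (fun a => h a b)).sum)).sum := by
  induction l1 with
  | nil => simp
  | cons a l ih =>
      simp only [List.map_cons, List.sum_cons, ih]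
      rw [← list_sum_map_add]

lemma list_sum_const2 {α : Type*} (l : List α) (f : α → ℤ) (h : ∀ a ∈ l, f a = 2) :
    (l.map f).sum = 2 * l.length := by
  induction l with
  | nil => simp
  | cons a l ih =>
      simp only [List.map_cons, List.sum_cons, h a List.mem_cons_self,
        ih (fun b hb => h b (List.mem_cons_of_mem a hb)), List.length_cons]
      push_cast
      ring

lemma list_sum_le_two {α : Type*} (l : List α) (f : α → ℤ) (h : ∀ a ∈ l, f a ≤ 2) :
    (l.map f).sum ≤ 2 * l.length := by
  induction l with
  | nil => simp
  | cons a l ih =>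
      simp only [List.map_cons, List.sum_cons, List.length_cons]
      have := h a List.mem_cons_self
      have := ih (fun b hb => h b (List.mem_cons_of_mem a hb))
      push_cast
      omega

end ListLemmas

section Key

variable (hG : G.Connected) {F : Set (Sym2 V)}
  (hFcl : ∀ e f, theta G e f → e ∈ F → f ∈ F)
include hG hFcl

lemma dart_edge_mem {d : G.Dart} (hd : d.edge ∈ F) : s(d.fst, d.snd) ∈ F := hd

omit hG in
include hFcl in
lemma telescope_F' {d : G.Dart} (hd : d.edge ∈ F) {x y : V} (W : G.Walk x y) :
    ((Fdarts G F W).map (fun f => gI G d.fst d.snd f.snd - gI G d.fst d.snd f.fst)).sum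
      = gI G d.fst d.snd y - gI G d.fst d.snd x :=
  telescope_F hFcl d.adj hd W

/-- The key identity: twice the number of `F`-edges of a geodesic from `x` to `y`
equals the sum, over the `F`-darts of any `x`–`y` walk, of the variation of the
associated `g` functions. -/
lemma keyId {x y : V} (P : G.Walk x y) (hP : P.length = G.dist x y) (W : G.Walk x y) :
    2 * (cF G F P : ℤ)
      = ((Fdarts G F W).map (fun f => gI G f.fst f.snd y - gI G f.fst f.snd x)).sum := by
  have step1 : ((Fdarts G F P).map (fun e => gI G e.fst e.snd y - gI G e.fst e.snd x)).sum
      = 2 * (cF G F P : ℤ) :=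
    list_sum_const2 (Fdarts G F P) _ (fun e he => by
      obtain ⟨heP, -⟩ := mem_Fdarts.1 he
      have := geodesic_dart_vals hG P hP heP
      omega)
  have step2 : ((Fdarts G F P).map (fun e => gI G e.fst e.snd y - gI G e.fst e.snd x)).sum
      = ((Fdarts G F P).map (fun e =>
          ((Fdarts G F W).map
            (fun f => gI G e.fst e.snd f.snd - gI G e.fst e.snd f.fst)).sum)).sum := by
    apply congrArg
    apply List.map_congr_left
    intro e he
    obtain ⟨-, heF⟩ := mem_Fdarts.1 he
    rw [telescope_F' hFcl heF W]
  have step3 := list_sum_swap (Fdarts G F P) (Fdarts G F W)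
    (fun e f => gI G e.fst e.snd f.snd - gI G e.fst e.snd f.fst)
  have step4 : ((Fdarts G F W).map (fun f =>
        ((Fdarts G F P).map
          (fun e => gI G e.fst e.snd f.snd - gI G e.fst e.snd f.fst)).sum)).sum
      = ((Fdarts G F W).map (fun f => gI G f.fst f.snd y - gI G f.fst f.snd x)).sum := by
    apply congrArg
    apply List.map_congr_left
    intro f hf
    obtain ⟨-, hfF⟩ := mem_Fdarts.1 hf
    refine Eq.trans ?_ (telescope_F' hFcl hfF P)
    apply congrArg
    apply List.map_congr_left
    intro e he
    exact sig_symm e.fst e.snd f.fst f.snd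
  exact step1.symm.trans (step2.trans (step3.trans step4))

/-- Any walk crosses `F` at least as often as a geodesic with the same endpoints. -/
lemma cF_geodesic_le {x y : V} (P : G.Walk x y) (hP : P.length = G.dist x y)
    (W : G.Walk x y) : cF G F P ≤ cF G F W := by
  have hkey := keyId hG hFcl P hP W
  have hbound : ((Fdarts G F W).map
      (fun f => gI G f.fst f.snd y - gI G f.fst f.snd x)).sum ≤ 2 * (cF G F W : ℤ) := by
    apply list_sum_le_two
    intro f hf
    have h1 := gI_le_one hG f.adj y
    have h2 := neg_one_le_gI hG f.adj x
    omega
  omega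

end Key

section Quotient

variable (G) (F : Set (Sym2 V))

/-- The component of `x` in `G - F`. -/
abbrev qm (x : V) : (G.deleteEdges F).ConnectedComponent :=
  (G.deleteEdges F).connectedComponentMk x

/-- An `(G-F)`-walk viewed as a `G`-walk. -/
def liftWalk {x y : V} (p : (G.deleteEdges F).Walk x y) : G.Walk x y :=
  p.transfer G (fun e he => by
    have h1 := p.edges_subset_edgeSet he
    rw [SimpleGraph.edgeSet_deleteEdges] at h1
    exact h1.1)

variable {G F}

lemma Fdarts_liftWalk {x y : V} (p : (G.deleteEdges F).Walk x y) :
    Fdarts G F (liftWalk G F p) = [] := by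
  rw [Fdarts, List.filter_eq_nil_iff]
  intro d hd
  have hde : d.edge ∈ (liftWalk G F p).edges := List.mem_map_of_mem hd
  have : (liftWalk G F p).edges = p.edges := SimpleGraph.Walk.edges_transfer _ _
  rw [this] at hde
  have h1 := p.edges_subset_edgeSet hde
  rw [SimpleGraph.edgeSet_deleteEdges] at h1
  simpa using h1.2

lemma cF_liftWalk {x y : V} (p : (G.deleteEdges F).Walk x y) :
    cF G F (liftWalk G F p) = 0 := by
  rw [cF, Fdarts_liftWalk, List.length_nil]

lemma cF_cons_mem {a c y : V} (h : G.Adj a c) (p : G.Walk c y) (hc : s(a, c) ∈ F) :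
    cF G F (SimpleGraph.Walk.cons h p) = cF G F p + 1 := by
  have hedge : (SimpleGraph.Dart.mk (a, c) h).edge = s(a, c) := rfl
  simp [cF, Fdarts, SimpleGraph.Walk.darts_cons, List.filter_cons, hedge, hc]

lemma cF_cons_not_mem {a c y : V} (h : G.Adj a c) (p : G.Walk c y) (hc : s(a, c) ∉ F) :
    cF G F (SimpleGraph.Walk.cons h p) = cF G F p := by
  have hedge : (SimpleGraph.Dart.mk (a, c) h).edge = s(a, c) := rfl
  simp [cF, Fdarts, SimpleGraph.Walk.darts_cons, List.filter_cons, hedge, hc]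

lemma cF_append {x y z : V} (p : G.Walk x y) (q : G.Walk y z) :
    cF G F (p.append q) = cF G F p + cF G F q := by
  rw [cF, cF, cF, Fdarts, Fdarts, Fdarts, SimpleGraph.Walk.darts_append, List.filter_append,
    List.length_append]

lemma Fdarts_concat_mem {x u v : V} (p : G.Walk x u) (h : G.Adj u v) (hc : s(u, v) ∈ F) :
    Fdarts G F (p.concat h) = Fdarts G F p ++ [SimpleGraph.Dart.mk (u, v) h] := by
  have hedge : (SimpleGraph.Dart.mk (u, v) h).edge = s(u, v) := rfl
  rw [Fdarts, SimpleGraph.Walk.darts_concat, List.concat_eq_append, List.filter_append, Fdarts]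
  congr 1
  simp [hedge, hc]

lemma cF_concat_mem {x u v : V} (p : G.Walk x u) (h : G.Adj u v) (hc : s(u, v) ∈ F) :
    cF G F (p.concat h) = cF G F p + 1 := by
  rw [cF, Fdarts_concat_mem p h hc, List.length_append, List.length_singleton, cF]

section WithCl

variable (hFcl : ∀ e f, theta G e f → e ∈ F → f ∈ F)
include hFcl

/-- `g_{u,v}` is constant on the components of `G - F` when `s(u,v) ∈ F`. -/
lemma gI_const_on_comp {u v : V} (huv : G.Adj u v) (he : s(u, v) ∈ F) {x y : V}
    (h : qm G F x = qm G F y) : gI G u v x = gI G u v y := by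
  obtain ⟨p⟩ := SimpleGraph.ConnectedComponent.exact h
  have ht := telescope_F hFcl huv he (liftWalk G F p)
  rw [Fdarts_liftWalk] at ht
  simp at ht
  omega

/-- The two endpoints of an `F`-edge lie in different components of `G - F`. -/
lemma qm_ne {u v : V} (huv : G.Adj u v) (he : s(u, v) ∈ F) : qm G F u ≠ qm G F v := by
  intro h
  have := gI_const_on_comp hFcl huv he h
  rw [gI, gI, SimpleGraph.dist_self, dist_adj huv, G.dist_comm, dist_adj huv,
    SimpleGraph.dist_self] at this
  omega

/-- A walk in `G` projects to a walk in the quotient of length at most the number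
of its `F`-edges. -/
lemma exists_qwalk {x y : V} (W : G.Walk x y) :
    ∃ Q : (quotientGraph G F).Walk (qm G F x) (qm G F y), Q.length ≤ cF G F W := by
  induction W with
  | nil => exact ⟨SimpleGraph.Walk.nil, by simp⟩
  | @cons a c y h p ih =>
      obtain ⟨Q, hQ⟩ := ih
      by_cases hc : s(a, c) ∈ F
      · have hadj : (quotientGraph G F).Adj (qm G F a) (qm G F c) :=
          ⟨qm_ne hFcl h hc, a, c, rfl, rfl, h⟩
        refine ⟨SimpleGraph.Walk.cons hadj Q, ?_⟩
        rw [SimpleGraph.Walk.length_cons, cF_cons_mem h p hc]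
        omega
      · have hH : (G.deleteEdges F).Adj a c := by
          rw [SimpleGraph.deleteEdges_adj]
          exact ⟨h, hc⟩
        have heq : qm G F a = qm G F c :=
          SimpleGraph.ConnectedComponent.connectedComponentMk_eq_of_adj hH
        refine ⟨Q.copy heq.symm rfl, ?_⟩
        rw [SimpleGraph.Walk.length_copy, cF_cons_not_mem h p hc]
        omega

/-- A walk in the quotient lifts to a walk in `G` with at most as many `F`-edges. -/
lemma qwalk_lift {X Y : (G.deleteEdges F).ConnectedComponent}
    (Q : (quotientGraph G F).Walk X Y) :
    ∀ x y : V, qm G F x = X → qm G F y = Y → ∃ W : G.Walk x y, cF G F W ≤ Q.length := by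
  induction Q with
  | nil =>
      intro x y hx hy
      obtain ⟨p⟩ := SimpleGraph.ConnectedComponent.exact (hx.trans hy.symm)
      exact ⟨liftWalk G F p, by rw [cF_liftWalk]; simp⟩
  | @cons X Z Y hAdj Q ih =>
      intro x y hx hy
      obtain ⟨hne, a, b, ha, hb, hab⟩ := id hAdj
      obtain ⟨p1⟩ := SimpleGraph.ConnectedComponent.exact (hx.trans ha.symm)
      obtain ⟨W2, hW2⟩ := ih b y hb hy
      refine ⟨(liftWalk G F p1).append (SimpleGraph.Walk.cons hab W2), ?_⟩
      rw [cF_append, cF_liftWalk, SimpleGraph.Walk.length_cons]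
      by_cases hc : s(a, b) ∈ F
      · rw [cF_cons_mem hab W2 hc]; omega
      · rw [cF_cons_not_mem hab W2 hc]; omega

variable (hG : G.Connected)
include hG

/-- The quotient distance equals the number of `F`-edges on any geodesic. -/
lemma qdist_eq {x y : V} (P : G.Walk x y) (hP : P.length = G.dist x y) :
    (quotientGraph G F).dist (qm G F x) (qm G F y) = cF G F P := by
  obtain ⟨Q, hQ⟩ := exists_qwalk hFcl P
  refine le_antisymm ((SimpleGraph.dist_le Q).trans hQ) ?_
  obtain ⟨Qg, hQg⟩ := SimpleGraph.Reachable.exists_walk_length_eq_dist ⟨Q⟩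
  obtain ⟨W, hW⟩ := qwalk_lift hFcl Qg x y rfl rfl
  calc cF G F P ≤ cF G F W := cF_geodesic_le hG hFcl P hP W
    _ ≤ Qg.length := hW
    _ = _ := hQg

lemma qdist_of_lt {u v x : V} (huv : G.Adj u v) (he : s(u, v) ∈ F)
    (hlt : G.dist x u < G.dist x v) :
    (quotientGraph G F).dist (qm G F x) (qm G F v)
      = (quotientGraph G F).dist (qm G F x) (qm G F u) + 1 := by
  obtain ⟨Pu, hPu⟩ := (hG.preconnected x u).exists_walk_length_eq_dist
  have htri : G.dist x v ≤ G.dist x u + 1 := by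
    have := hG.dist_triangle (u := x) (v := u) (w := v)
    have := dist_adj huv
    omega
  have hconcat : (Pu.concat huv).length = G.dist x v := by
    rw [SimpleGraph.Walk.length_concat, hPu]
    omega
  rw [qdist_eq hFcl hG _ hconcat, qdist_eq hFcl hG Pu hPu, cF_concat_mem Pu huv he]

lemma qdist_of_dist_eq {u v x : V} (huv : G.Adj u v) (he : s(u, v) ∈ F)
    (heq : G.dist x u = G.dist x v) :
    (quotientGraph G F).dist (qm G F x) (qm G F u)
      = (quotientGraph G F).dist (qm G F x) (qm G F v) := by
  obtain ⟨Pu, hPu⟩ := (hG.preconnected x u).exists_walk_length_eq_dist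
  obtain ⟨Pv, hPv⟩ := (hG.preconnected x v).exists_walk_length_eq_dist
  have hkey := keyId hG hFcl Pv hPv (Pu.concat huv)
  rw [Fdarts_concat_mem Pu huv he, List.map_append, List.sum_append] at hkey
  have hval1 : gI G u v v = 1 := by
    rw [gI, G.dist_comm, dist_adj huv, SimpleGraph.dist_self]; ring
  have hval2 : gI G u v x = 0 := by rw [gI]; omega
  have hvalu : gI G u v u = -1 := by
    rw [gI, SimpleGraph.dist_self, dist_adj huv]; ring
  have hsingle : ((([SimpleGraph.Dart.mk (u, v) huv] : List G.Dart).map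
      (fun f => gI G f.fst f.snd v - gI G f.fst f.snd x)).sum : ℤ) = 1 := by
    have h1 : (SimpleGraph.Dart.mk (u, v) huv).fst = u := rfl
    have h2 : (SimpleGraph.Dart.mk (u, v) huv).snd = v := rfl
    simp only [List.map_cons, List.map_nil, List.sum_cons, List.sum_nil, h1, h2,
      hval1, hval2]
    ring
  rw [hsingle] at hkey
  have hsplit : ((Fdarts G F Pu).map (fun f => gI G f.fst f.snd v - gI G f.fst f.snd x)).sum
      = ((Fdarts G F Pu).map (fun f => gI G f.fst f.snd u - gI G f.fst f.snd x)).sum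
        + ((Fdarts G F Pu).map (fun f => gI G f.fst f.snd v - gI G f.fst f.snd u)).sum := by
    rw [← list_sum_map_add]
    apply congrArg
    apply List.map_congr_left
    intro f hf
    ring
  have hA : ((Fdarts G F Pu).map (fun f => gI G f.fst f.snd u - gI G f.fst f.snd x)).sum
      = 2 * (cF G F Pu : ℤ) :=
    list_sum_const2 (Fdarts G F Pu) _ (fun f hf => by
      obtain ⟨hfP, -⟩ := mem_Fdarts.1 hf
      have := geodesic_dart_vals hG Pu hPu hfP
      omega)
  have hB : ((Fdarts G F Pu).map (fun f => gI G f.fst f.snd v - gI G f.fst f.snd u)).sum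
      = -1 := by
    have hcongr : ((Fdarts G F Pu).map (fun f => gI G f.fst f.snd v - gI G f.fst f.snd u)).sum
        = ((Fdarts G F Pu).map (fun f => gI G u v f.snd - gI G u v f.fst)).sum := by
      apply congrArg
      apply List.map_congr_left
      intro f hf
      exact (sig_symm u v f.fst f.snd).symm
    rw [hcongr, telescope_F hFcl huv he Pu, hvalu, hval2]
    ring
  rw [hsplit, hA, hB] at hkey
  have hcc : cF G F Pu = cF G F Pv := by omega
  rw [qdist_eq hFcl hG Pu hPu, qdist_eq hFcl hG Pv hPv, hcc]

/-- The fundamental comparison: `x` is closer to `u` than to `v` in `G` iff its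
component is closer to the component of `u` than to that of `v` in the quotient. -/
lemma qdist_lt_iff {u v x : V} (huv : G.Adj u v) (he : s(u, v) ∈ F) :
    G.dist x u < G.dist x v ↔
      (quotientGraph G F).dist (qm G F x) (qm G F u)
        < (quotientGraph G F).dist (qm G F x) (qm G F v) := by
  constructor
  · intro hlt
    rw [qdist_of_lt hFcl hG huv he hlt]
    omega
  · intro hq
    rcases lt_trichotomy (G.dist x u) (G.dist x v) with h | h | h
    · exact h
    · rw [qdist_of_dist_eq hFcl hG huv he h] at hq
      omega
    · have he' : s(v, u) ∈ F := by rwa [Sym2.eq_swap]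
      rw [qdist_of_lt hFcl hG huv.symm he' h] at hq
      omega

end WithCl

end Quotient

section Counting

variable [Fintype V] {F : Set (Sym2 V)}
variable (hG : G.Connected) (hFsub : F ⊆ G.edgeSet)
  (hFcl : ∀ e f, theta G e f → e ∈ F → f ∈ F)

/-- The weighted side-count in the quotient equals the unweighted side-count in `G`. -/
lemma card_side (hG : G.Connected) (hFcl : ∀ e f, theta G e f → e ∈ F → f ∈ F)
    {u v : V} (huv : G.Adj u v) (he : s(u, v) ∈ F) :
    nW (quotientGraph G F)
        (fun X => (Nat.card {x : V | (G.deleteEdges F).connectedComponentMk x = X} : NNReal))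
        (qm G F u) (qm G F v)
      = (Nat.card {x : V | G.dist x u < G.dist x v} : NNReal) := by
  classical
  haveI : Fintype (G.deleteEdges F).ConnectedComponent := Fintype.ofFinite _
  set S : Set (G.deleteEdges F).ConnectedComponent :=
    {X | (quotientGraph G F).dist X (qm G F u) < (quotientGraph G F).dist X (qm G F v)}
    with hS
  have hSfin : S.Finite := Set.toFinite _
  have h1 : nW (quotientGraph G F)
      (fun X => (Nat.card {x : V | (G.deleteEdges F).connectedComponentMk x = X} : NNReal))
      (qm G F u) (qm G F v)
      = ∑ X ∈ hSfin.toFinset,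
          (Nat.card {x : V | (G.deleteEdges F).connectedComponentMk x = X} : NNReal) := by
    rw [nW, ← finsum_mem_coe_finset, hSfin.coe_toFinset]
  rw [h1]
  have hset : {x : V | G.dist x u < G.dist x v} = {x : V | qm G F x ∈ S} := by
    ext x
    exact qdist_lt_iff hFcl hG huv he
  have hcard : Nat.card {x : V | G.dist x u < G.dist x v}
      = ∑ X ∈ hSfin.toFinset, Nat.card {x : V | (G.deleteEdges F).connectedComponentMk x = X} := by
    rw [hset]
    have hL : Nat.card {x : V | qm G F x ∈ S}
        = (Finset.univ.filter (fun x : V => qm G F x ∈ S)).card := by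
      rw [Nat.card_eq_card_toFinset, Set.toFinset_setOf]
    rw [hL, Finset.card_eq_sum_card_fiberwise
      (f := fun x : V => qm G F x) (t := hSfin.toFinset)
      (fun x hx => hSfin.mem_toFinset.2 (Finset.mem_filter.1 hx).2)]
    apply Finset.sum_congr rfl
    intro X hX
    have hXS : X ∈ S := hSfin.mem_toFinset.1 hX
    have : (Finset.univ.filter (fun x : V => qm G F x ∈ S)).filter
        (fun x => qm G F x = X) = Finset.univ.filter (fun x : V => qm G F x = X) := by
      ext x
      simp only [Finset.mem_filter, Finset.mem_univ, true_and]
      constructor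
      · rintro ⟨-, h⟩; exact h
      · intro h; exact ⟨h ▸ hXS, h⟩
    rw [this, Nat.card_eq_card_toFinset, Set.toFinset_setOf]
  rw [hcard]
  push_cast
  rfl

/-- For a quotient edge, the `G`-edges mapping onto it are exactly the `F`-edges
mapping onto it. -/
lemma fiber_eq (hFsub : F ⊆ G.edgeSet) {E : Sym2 (G.deleteEdges F).ConnectedComponent}
    (hE : E ∈ (quotientGraph G F).edgeSet) :
    {e : Sym2 V | e ∈ G.edgeSet ∧ Sym2.map (qm G F) e = E}
      = {e : Sym2 V | e ∈ F ∧ Sym2.map (qm G F) e = E} := by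
  ext e
  induction e using Sym2.inductionOn with
  | _ a b =>
    simp only [Set.mem_setOf_eq]
    constructor
    · rintro ⟨hab, hm⟩
      refine ⟨?_, hm⟩
      by_contra hnF
      have hH : (G.deleteEdges F).Adj a b := by
        rw [SimpleGraph.deleteEdges_adj]
        exact ⟨G.mem_edgeSet.1 hab, hnF⟩
      have hqm : qm G F a = qm G F b :=
        SimpleGraph.ConnectedComponent.connectedComponentMk_eq_of_adj hH
      rw [Sym2.map_pair_eq] at hm
      rw [← hm] at hE
      have : (quotientGraph G F).Adj (qm G F a) (qm G F b) := hE
      exact this.1 hqm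
    · rintro ⟨hab, hm⟩
      exact ⟨hFsub hab, hm⟩


/-- The contribution of the part `F` to the Mostar index equals the weighted
Mostar index of the quotient graph. -/
lemma per_part (hG : G.Connected) (hFsub : F ⊆ G.edgeSet)
    (hFcl : ∀ e f, theta G e f → e ∈ F → f ∈ F) :
    (∑ᶠ e ∈ F,
      Sym2.lift ⟨fun u v =>
        |((Nat.card {x : V | G.dist x u < G.dist x v} : ℝ)) -
          ((Nat.card {x : V | G.dist x v < G.dist x u} : ℝ))|,
        fun _ _ => abs_sub_comm _ _⟩ e)
      = MostarW (quotientGraph G F)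
          (fun X => (Nat.card {x : V |
              (G.deleteEdges F).connectedComponentMk x = X} : NNReal))
          (fun E => (Nat.card {e : Sym2 V | e ∈ G.edgeSet ∧
              Sym2.map ((G.deleteEdges F).connectedComponentMk) e = E} :
            NNReal)) := by
  classical
  haveI : Fintype (G.deleteEdges F).ConnectedComponent := Fintype.ofFinite _
  have hFfin : F.Finite := Set.toFinite _
  have hEfin : (quotientGraph G F).edgeSet.Finite := Set.toFinite _
  have hLHS : (∑ᶠ e ∈ F,
      Sym2.lift ⟨fun u v =>
        |((Nat.card {x : V | G.dist x u < G.dist x v} : ℝ)) -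
          ((Nat.card {x : V | G.dist x v < G.dist x u} : ℝ))|,
        fun _ _ => abs_sub_comm _ _⟩ e)
      = ∑ e ∈ hFfin.toFinset,
          Sym2.lift ⟨fun u v =>
            |((Nat.card {x : V | G.dist x u < G.dist x v} : ℝ)) -
              ((Nat.card {x : V | G.dist x v < G.dist x u} : ℝ))|,
            fun _ _ => abs_sub_comm _ _⟩ e := by
    rw [← finsum_mem_coe_finset, hFfin.coe_toFinset]
  have hRHS : MostarW (quotientGraph G F)
        (fun X => (Nat.card {x : V |
            (G.deleteEdges F).connectedComponentMk x = X} : NNReal))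
        (fun E => (Nat.card {e : Sym2 V | e ∈ G.edgeSet ∧
            Sym2.map ((G.deleteEdges F).connectedComponentMk) e = E} : NNReal))
      = ∑ E ∈ hEfin.toFinset,
          ((Nat.card {e : Sym2 V | e ∈ G.edgeSet ∧
              Sym2.map ((G.deleteEdges F).connectedComponentMk) e = E} : NNReal) : ℝ) *
            Sym2.lift ⟨fun X Y =>
              |((nW (quotientGraph G F) (fun X => (Nat.card {x : V |
                  (G.deleteEdges F).connectedComponentMk x = X} : NNReal)) X Y : ℝ)) -
                ((nW (quotientGraph G F) (fun X => (Nat.card {x : V |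
                  (G.deleteEdges F).connectedComponentMk x = X} : NNReal)) Y X : ℝ))|,
              fun _ _ => abs_sub_comm _ _⟩ E := by
    rw [MostarW, ← finsum_mem_coe_finset, hEfin.coe_toFinset]
  rw [hLHS, hRHS]
  have hmaps : ∀ e ∈ hFfin.toFinset,
      Sym2.map ((G.deleteEdges F).connectedComponentMk) e ∈ hEfin.toFinset := by
    intro e he
    rw [hFfin.mem_toFinset] at he
    revert he
    induction e using Sym2.inductionOn with
    | _ a b =>
      intro he
      have hab : G.Adj a b := G.mem_edgeSet.1 (hFsub he)
      rw [hEfin.mem_toFinset, Sym2.map_pair_eq]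
      exact ⟨qm_ne hFcl hab he, a, b, rfl, rfl, hab⟩
  rw [← Finset.sum_fiberwise_of_maps_to hmaps]
  apply Finset.sum_congr rfl
  intro E hE
  have hEedge : E ∈ (quotientGraph G F).edgeSet := hEfin.mem_toFinset.1 hE
  have hinner : ∀ e ∈ hFfin.toFinset.filter
      (fun e => Sym2.map ((G.deleteEdges F).connectedComponentMk) e = E),
      Sym2.lift ⟨fun u v =>
        |((Nat.card {x : V | G.dist x u < G.dist x v} : ℝ)) -
          ((Nat.card {x : V | G.dist x v < G.dist x u} : ℝ))|,
        fun _ _ => abs_sub_comm _ _⟩ e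
      = Sym2.lift ⟨fun X Y =>
          |((nW (quotientGraph G F) (fun X => (Nat.card {x : V |
              (G.deleteEdges F).connectedComponentMk x = X} : NNReal)) X Y : ℝ)) -
            ((nW (quotientGraph G F) (fun X => (Nat.card {x : V |
              (G.deleteEdges F).connectedComponentMk x = X} : NNReal)) Y X : ℝ))|,
          fun _ _ => abs_sub_comm _ _⟩ E := by
    intro e he'
    obtain ⟨heF', hme⟩ := Finset.mem_filter.1 he'
    have heF : e ∈ F := hFfin.mem_toFinset.1 heF'
    rw [← hme]
    clear hme he' heF'
    revert heF
    induction e using Sym2.inductionOn with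
    | _ a b =>
      intro heF
      have hab : G.Adj a b := G.mem_edgeSet.1 (hFsub heF)
      have hba : s(b, a) ∈ F := by rwa [Sym2.eq_swap]
      have h1 := card_side hG hFcl hab heF
      have h2 := card_side hG hFcl hab.symm hba
      simp only [qm] at h1 h2
      simp only [Sym2.map_pair_eq, Sym2.lift_mk]
      rw [h1, h2, NNReal.coe_natCast, NNReal.coe_natCast]
  rw [Finset.sum_congr rfl hinner, Finset.sum_const, nsmul_eq_mul]
  congr 1
  have hfibcard : Nat.card {e : Sym2 V | e ∈ G.edgeSet ∧
      Sym2.map ((G.deleteEdges F).connectedComponentMk) e = E}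
      = (hFfin.toFinset.filter
          (fun e => Sym2.map ((G.deleteEdges F).connectedComponentMk) e = E)).card := by
    rw [fiber_eq hFsub hEedge, Nat.card_eq_card_toFinset]
    congr 1
    ext e
    simp [hFfin.mem_toFinset, Set.mem_toFinset, Set.mem_setOf_eq]
  rw [hfibcard]
  push_cast
  rfl

end Counting
end MostarProof

/-- the Mostar index of a finite connected graph `G` equals the
sum over a c-partition `{F₁, …, F_k}` of the weighted Mostar indices of the
quotient graphs `(G_i, λ_i, λ_i')`, where `λ_i(X)` is the number of vertices
of the component `X` and `λ_i'(XY)` is the number of edges of `G` between the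
components `X` and `Y`. -/
theorem mostar_eq_sum_quotients {V : Type*} [Fintype V] (G : SimpleGraph V)
    (hG : G.Connected) {k : ℕ} (F : Fin k → Set (Sym2 V))
    (hF : IsCPartition G F) :
    Mostar G = ∑ i : Fin k,
      MostarW (quotientGraph G (F i))
        (fun X => (Nat.card {x : V |
            (G.deleteEdges (F i)).connectedComponentMk x = X} : NNReal))
        (fun E => (Nat.card {e : Sym2 V | e ∈ G.edgeSet ∧
            Sym2.map ((G.deleteEdges (F i)).connectedComponentMk) e = E} :
          NNReal)) := by

  classical
  obtain ⟨⟨hsub, hcover, hdisj⟩, hclose⟩ := hF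
  have hFcl : ∀ i, ∀ e f, theta G e f → e ∈ F i → f ∈ F i :=
    fun i e f h he => hclose e f (Relation.TransGen.single h) i he
  have hUnion : G.edgeSet = ⋃ i, F i := by
    ext e
    constructor
    · intro he
      rcases hcover e he with ⟨i, hi⟩
      exact Set.mem_iUnion.2 ⟨i, hi⟩
    · intro he
      rcases Set.mem_iUnion.1 he with ⟨i, hi⟩
      exact hsub i hi
  conv_lhs => rw [Mostar, hUnion,
    finsum_mem_iUnion (fun i j hij => hdisj i j hij) (fun i => Set.toFinite _),
    finsum_eq_sum_of_fintype]
  apply Finset.sum_congr rfl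
  intro i _
  exact MostarProof.per_part hG (hsub i) (hFcl i)
end
end
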